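/- arXiv:0909.3733 — 9 statements merged into one kernel-verified Lean document; each statement's English description precedes it below -/
import Mathlib

section
/- Let p > 5 be a prime. Then 5 · ∑_{k=0}^{p-1} 2^k · binom(3k, k) ≡ 6·(-1)^{(p-1)/2} − 1 (mod p). -/
open Polynomial Finset



variable {p : ℕ} [Fact p.Prime]

namespace Stmt2Aux

noncomputable def Apoly (p : ℕ) : Polynomial (ZMod p) :=
  ∑ i ∈ Finset.range p, C ((-2 : ZMod p) ^ (p - 1 - i)) * X ^ i

lemma Apoly_mul : Apoly p * (X + 2) = X ^ p + 2 := by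
  have h := geom_sum₂_mul (X : Polynomial (ZMod p)) (C (-2)) p
  have h2 : (∑ i ∈ Finset.range p, (X : Polynomial (ZMod p)) ^ i * C (-2) ^ (p - 1 - i))
      = Apoly p := by
    unfold Apoly
    refine Finset.sum_congr rfl fun i _ => ?_
    rw [← C_pow, mul_comm]
  have h4 : (C (-2) : Polynomial (ZMod p)) ^ p = C (-2) := by
    rw [← C_pow, ZMod.pow_card]
  rw [h2, h4] at h
  have h3 : (X : Polynomial (ZMod p)) - C (-2) = X + 2 := by
    rw [map_neg, sub_neg_eq_add, show (C 2 : Polynomial (ZMod p)) = 2 from map_ofNat C 2]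
  have h5 : (X : Polynomial (ZMod p)) ^ p - C (-2) = X ^ p + 2 := by
    rw [map_neg, sub_neg_eq_add, show (C 2 : Polynomial (ZMod p)) = 2 from map_ofNat C 2]
  rw [h3, h5] at h
  exact h

lemma coeff_Apoly {i : ℕ} (hi : i < p) : (Apoly p).coeff i = (-2 : ZMod p) ^ (p - 1 - i) := by
  unfold Apoly
  rw [finset_sum_coeff]
  simp only [coeff_C_mul, coeff_X_pow, mul_ite, mul_one, mul_zero]
  rw [Finset.sum_ite_eq (Finset.range p)]
  simp [hi]

lemma coeff_Apoly_mul (V : Polynomial (ZMod p)) (hV : V.natDegree < p) :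
    (Apoly p * V).coeff (p - 1) = V.eval (-2) := by
  have hppos : 0 < p := (Fact.out (p := p.Prime)).pos
  have hp1 : p - 1 + 1 = p := by omega
  rw [coeff_mul, Finset.Nat.sum_antidiagonal_eq_sum_range_succ_mk, Nat.succ_eq_add_one, hp1,
    eval_eq_sum_range' hV, ← Finset.sum_range_reflect]
  refine Finset.sum_congr rfl fun j hj => ?_
  rw [Finset.mem_range] at hj
  have h1 : p - 1 - (p - 1 - j) = j := by omega
  rw [coeff_Apoly (by omega : p - 1 - j < p), h1, mul_comm]



variable {p : ℕ} [Fact p.Prime]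


variable {p : ℕ} [Fact p.Prime]

lemma sum_eq_coeff (hp5 : 5 < p) :
    ∑ k ∈ Finset.range p, (2 : ZMod p) ^ k * ((3 * k).choose k : ZMod p) =
      (∑ k ∈ Finset.range p,
        ((2 : Polynomial (ZMod p)) * (1 + X) ^ 3) ^ k * X ^ (p - 1 - k)).coeff (p - 1) := by
  rw [finset_sum_coeff]
  refine Finset.sum_congr rfl fun k hk => ?_
  rw [Finset.mem_range] at hk
  have h1 : ((2 : Polynomial (ZMod p)) * (1 + X) ^ 3) ^ k = C ((2:ZMod p) ^ k) * (1 + X) ^ (3 * k) := by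
    rw [mul_pow, ← pow_mul, C_pow, show (C 2 : Polynomial (ZMod p)) = 2 from map_ofNat C 2]
  rw [h1, coeff_mul_X_pow', if_pos (Nat.sub_le _ _),
    show p - 1 - (p - 1 - k) = k by omega, coeff_C_mul, coeff_one_add_X_pow]

lemma main_coeff (hp5 : 5 < p) (W Wp : Polynomial (ZMod p))
    (hW : (2 * X ^ 2 + 2 * X + 1 : Polynomial (ZMod p)) * W = 1 + X ^ p * Wp)
    (hdeg : W.natDegree < p) :
    ∑ k ∈ Finset.range p, (2 : ZMod p) ^ k * ((3 * k).choose k : ZMod p) = W.eval (-2) := by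
  have hppos : 0 < p := by omega
  set P := ∑ k ∈ Finset.range p,
    ((2 : Polynomial (ZMod p)) * (1 + X) ^ 3) ^ k * X ^ (p - 1 - k) with hP
  set A := Stmt2Aux.Apoly p with hA
  have h2p : (2 : Polynomial (ZMod p)) ^ p = 2 := by
    rw [← map_ofNat (C : ZMod p →+* Polynomial (ZMod p)) 2, ← C_pow, ZMod.pow_card]
  have hPf : P * (2 * (1 + X) ^ 3 - X) = (2 * (1 + X) ^ 3 - X) ^ p := by
    rw [hP, geom_sum₂_mul, sub_pow_char]
  have hfp : (2 * (1 + X) ^ 3 - (X : Polynomial (ZMod p))) ^ p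
      = 2 + X ^ p * (5 + 6 * X ^ p + 2 * (X ^ p) ^ 2) := by
    rw [sub_pow_char, mul_pow, h2p, ← pow_mul, mul_comm 3 p, pow_mul, add_pow_char, one_pow]
    ring
  have hE : (2 * (1 + X) ^ 3 - X) * (A * W) = (X ^ p + 2) * (1 + X ^ p * Wp) := by
    calc (2 * (1 + X) ^ 3 - X) * (A * W)
        = (A * (X + 2)) * ((2 * X ^ 2 + 2 * X + 1) * W) := by ring
      _ = (X ^ p + 2) * (1 + X ^ p * Wp) := by rw [hA, Stmt2Aux.Apoly_mul, hW]
  have key : P * ((X ^ p + 2) * (1 + X ^ p * Wp))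
      = ((2 : Polynomial (ZMod p)) * (1 + X) ^ 3 - X) ^ p * (A * W) := by
    rw [← hE, ← hPf]; ring
  have hc0 : ∀ J : Polynomial (ZMod p), (X ^ p * J).coeff (p - 1) = 0 := by
    intro J
    rw [mul_comm, coeff_mul_X_pow']
    simp only [ite_eq_right_iff]
    intro h; omega
  have h2C : (2 : Polynomial (ZMod p)) = C 2 := (map_ofNat C 2).symm
  have lhs_eq : (P * ((X ^ p + 2) * (1 + X ^ p * Wp))).coeff (p - 1) = 2 * P.coeff (p - 1) := by
    have e : P * ((X ^ p + 2) * (1 + X ^ p * Wp))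
        = 2 * P + X ^ p * (P * (1 + X ^ p * Wp + 2 * Wp)) := by ring
    rw [e, coeff_add, hc0, add_zero, h2C, coeff_C_mul]
  have rhs_eq : (((2 : Polynomial (ZMod p)) * (1 + X) ^ 3 - X) ^ p * (A * W)).coeff (p - 1)
      = 2 * W.eval (-2) := by
    have e : ((2 : Polynomial (ZMod p)) * (1 + X) ^ 3 - X) ^ p * (A * W)
        = 2 * (A * W) + X ^ p * ((5 + 6 * X ^ p + 2 * (X ^ p) ^ 2) * (A * W)) := by
      rw [hfp]; ring
    rw [e, coeff_add, hc0, add_zero, h2C, coeff_C_mul, hA, Stmt2Aux.coeff_Apoly_mul W hdeg]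
  have hmain : 2 * P.coeff (p - 1) = 2 * W.eval (-2) := by rw [← lhs_eq, key, rhs_eq]
  have h2ne : (2 : ZMod p) ≠ 0 := by
    rw [show (2 : ZMod p) = ((2 : ℕ) : ZMod p) by norm_num, Ne,
      ZMod.natCast_eq_zero_iff]
    intro hd; have := Nat.le_of_dvd (by norm_num) hd; omega
  rw [sum_eq_coeff hp5, ← hP, mul_left_cancel₀ h2ne hmain]







lemma h2ne' (hp5 : 5 < p) : (2 : ZMod p) ≠ 0 := by
  rw [show (2 : ZMod p) = ((2 : ℕ) : ZMod p) by norm_num, Ne,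
    ZMod.natCast_eq_zero_iff]
  intro hd; have := Nat.le_of_dvd (by norm_num) hd; omega

lemma two_pow_half (hp5 : 5 < p) (hodd : p % 2 = 1) :
    ((p % 8 = 1 ∨ p % 8 = 7) → (2 : ZMod p) ^ ((p - 1) / 2) = 1) ∧
    ((p % 8 = 3 ∨ p % 8 = 5) → (2 : ZMod p) ^ ((p - 1) / 2) = -1) := by
  have h2ne : (2 : ZMod p) ≠ 0 := h2ne' hp5
  have hd2 : p / 2 = (p - 1) / 2 := by omega
  have hval := ZMod.pow_div_two_eq_neg_one_or_one (p := p) h2ne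
  have hiff := ZMod.euler_criterion (p := p) h2ne
  have hsqiff := ZMod.exists_sq_eq_two_iff (p := p) (by omega)
  rw [hd2] at hval hiff
  constructor
  · intro h
    exact hiff.mp (hsqiff.mpr h)
  · intro h
    rcases hval with h1 | h1
    · exfalso
      have := hsqiff.mp (hiff.mpr h1)
      omega
    · exact h1

lemma eps_one (hp5 : 5 < p) (hodd : p % 2 = 1) (h4 : p % 4 = 1) :
    (-4 : ZMod p) ^ ((p - 1) / 4) = 1 := by
  have hq : 2 * ((p - 1) / 4) = (p - 1) / 2 := by omega
  have e : (-4 : ZMod p) ^ ((p - 1) / 4) = (-1) ^ ((p - 1) / 4) * 2 ^ (2 * ((p - 1) / 4)) := by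
    rw [show (-4 : ZMod p) = -1 * 2 ^ 2 by norm_num, mul_pow, ← pow_mul, mul_comm 2]
  rw [e, hq]
  have h8 : p % 8 = 1 ∨ p % 8 = 5 := by omega
  rcases h8 with h8 | h8
  · rw [(two_pow_half hp5 hodd).1 (Or.inl h8), Even.neg_one_pow (Nat.even_iff.mpr (by omega))]
    norm_num
  · rw [(two_pow_half hp5 hodd).2 (Or.inr h8), Odd.neg_one_pow (Nat.odd_iff.mpr (by omega))]
    norm_num

lemma delta_two (hp5 : 5 < p) (hodd : p % 2 = 1) (h4 : p % 4 = 3) :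
    (-4 : ZMod p) ^ ((p + 1) / 4) = 2 := by
  have hq : 2 * ((p + 1) / 4) = (p - 1) / 2 + 1 := by omega
  have e : (-4 : ZMod p) ^ ((p + 1) / 4) = (-1) ^ ((p + 1) / 4) * 2 ^ (2 * ((p + 1) / 4)) := by
    rw [show (-4 : ZMod p) = -1 * 2 ^ 2 by norm_num, mul_pow, ← pow_mul, mul_comm 2]
  rw [e, hq, pow_succ]
  have h8 : p % 8 = 3 ∨ p % 8 = 7 := by omega
  rcases h8 with h8 | h8
  · rw [(two_pow_half hp5 hodd).2 (Or.inl h8), Odd.neg_one_pow (Nat.odd_iff.mpr (by omega))]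
    ring
  · rw [(two_pow_half hp5 hodd).1 (Or.inr h8), Even.neg_one_pow (Nat.even_iff.mpr (by omega))]
    ring


lemma case3 (hp5 : 5 < p) (hodd : p % 2 = 1) (h4 : p % 4 = 3) :
    5 * ∑ k ∈ Finset.range p, (2 : ZMod p) ^ k * ((3 * k).choose k : ZMod p) = -7 := by
  set m := (p + 1) / 4 with hm
  have hm4 : 4 * m = p + 1 := by omega
  have hm1 : 1 ≤ m := by omega
  set W : Polynomial (ZMod p) :=
    (2 * X ^ 2 - 2 * X + 1) * ∑ k ∈ Finset.range m, ((-4 : Polynomial (ZMod p)) * X ^ 4) ^ k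
    with hWdef
  have hgeom := geom_sum_mul ((-4 : Polynomial (ZMod p)) * X ^ 4) m
  have hXp : (X : Polynomial (ZMod p)) ^ (4 * m) = X ^ p * X := by
    rw [show 4 * m = p + 1 by omega, pow_succ]
  have hpow4 : ((-4 : Polynomial (ZMod p)) * X ^ 4) ^ m
      = (-4 : Polynomial (ZMod p)) ^ m * (X ^ p * X) := by
    rw [mul_pow, ← pow_mul, hXp]
  rw [hpow4] at hgeom
  have hW : (2 * X ^ 2 + 2 * X + 1 : Polynomial (ZMod p)) * W
      = 1 + X ^ p * (-((-4 : Polynomial (ZMod p)) ^ m * X)) := by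
    rw [hWdef]; linear_combination (-1 : Polynomial (ZMod p)) * hgeom
  have hdeg : W.natDegree < p := by
    have d1 : (2 * X ^ 2 - 2 * X + 1 : Polynomial (ZMod p)).natDegree ≤ 2 := by compute_degree
    have d2 : (∑ k ∈ Finset.range m,
        ((-4 : Polynomial (ZMod p)) * X ^ 4) ^ k).natDegree ≤ 4 * (m - 1) := by
      refine natDegree_sum_le_of_forall_le _ _ fun k hk => ?_
      refine natDegree_pow_le.trans ?_
      have hb : ((-4 : Polynomial (ZMod p)) * X ^ 4).natDegree ≤ 4 := by compute_degree
      have hk' : k < m := Finset.mem_range.mp hk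
      calc k * ((-4 : Polynomial (ZMod p)) * X ^ 4).natDegree ≤ k * 4 :=
            Nat.mul_le_mul_left k hb
        _ ≤ 4 * (m - 1) := by omega
    calc W.natDegree ≤ _ + _ := natDegree_mul_le
      _ < p := by omega
  have hmain := main_coeff hp5 W _ hW hdeg
  have heval : W.eval (-2) = 13 * ∑ k ∈ Finset.range m, (-64 : ZMod p) ^ k := by
    rw [hWdef, eval_mul, eval_finset_sum]
    have e1 : ∀ k ∈ Finset.range m,
        (((-4 : Polynomial (ZMod p)) * X ^ 4) ^ k).eval (-2) = (-64 : ZMod p) ^ k := by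
      intro k _
      rw [eval_pow, eval_mul, eval_pow, eval_X]
      norm_num
    rw [Finset.sum_congr rfl e1]
    norm_num
  have hdelta : (-4 : ZMod p) ^ m = 2 := delta_two hp5 hodd h4
  have h64 : (-64 : ZMod p) ^ m = 8 := by
    rw [show (-64 : ZMod p) = (-4) ^ 3 by norm_num, ← pow_mul, mul_comm 3 m, pow_mul, hdelta]
    norm_num
  have hgs := geom_sum_mul (-64 : ZMod p) m
  rw [h64] at hgs
  rw [hmain, heval]
  linear_combination (-1 : ZMod p) * hgs

lemma case1 (hp5 : 5 < p) (hodd : p % 2 = 1) (h4 : p % 4 = 1) (h13 : p ≠ 13) :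
    5 * ∑ k ∈ Finset.range p, (2 : ZMod p) ^ k * ((3 * k).choose k : ZMod p) = 5 := by
  set q := (p - 1) / 4 with hqd
  have hq4 : 4 * q = p - 1 := by omega
  have hq1 : 1 ≤ q := by omega
  set W : Polynomial (ZMod p) :=
    (2 * X ^ 2 - 2 * X + 1) * (∑ k ∈ Finset.range q, ((-4 : Polynomial (ZMod p)) * X ^ 4) ^ k)
      + (-4 : Polynomial (ZMod p)) ^ q * X ^ (4 * q) with hWdef
  have hgeom := geom_sum_mul ((-4 : Polynomial (ZMod p)) * X ^ 4) q
  have hXp : (X : Polynomial (ZMod p)) ^ p = X ^ (4 * q) * X := by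
    rw [← pow_succ]
    exact congrArg (fun n => (X : Polynomial (ZMod p)) ^ n) (by omega)
  have hW : (2 * X ^ 2 + 2 * X + 1 : Polynomial (ZMod p)) * W
      = 1 + X ^ p * ((-4 : Polynomial (ZMod p)) ^ q * (2 + 2 * X)) := by
    rw [hWdef, hXp]; linear_combination (-1 : Polynomial (ZMod p)) * hgeom
  have hdeg : W.natDegree < p := by
    have d1 : (2 * X ^ 2 - 2 * X + 1 : Polynomial (ZMod p)).natDegree ≤ 2 := by compute_degree
    have d2 : (∑ k ∈ Finset.range q,
        ((-4 : Polynomial (ZMod p)) * X ^ 4) ^ k).natDegree ≤ 4 * (q - 1) := by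
      refine natDegree_sum_le_of_forall_le _ _ fun k hk => ?_
      refine natDegree_pow_le.trans ?_
      have hb : ((-4 : Polynomial (ZMod p)) * X ^ 4).natDegree ≤ 4 := by compute_degree
      have hk' : k < q := Finset.mem_range.mp hk
      calc k * ((-4 : Polynomial (ZMod p)) * X ^ 4).natDegree ≤ k * 4 :=
            Nat.mul_le_mul_left k hb
        _ ≤ 4 * (q - 1) := by omega
    have d3 : ((-4 : Polynomial (ZMod p)) ^ q * X ^ (4 * q)).natDegree ≤ 4 * q := by
      refine natDegree_mul_le.trans ?_
      have h0 : ((-4 : Polynomial (ZMod p)) ^ q).natDegree ≤ 0 :=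
        natDegree_pow_le.trans (by simp)
      have := natDegree_X_pow (R := ZMod p) (4 * q)
      omega
    refine (natDegree_add_le _ _).trans_lt ?_
    have d4 := natDegree_mul_le (p := (2 * X ^ 2 - 2 * X + 1 : Polynomial (ZMod p)))
      (q := ∑ k ∈ Finset.range q, ((-4 : Polynomial (ZMod p)) * X ^ 4) ^ k)
    omega
  have hmain := main_coeff hp5 W _ hW hdeg
  have h2ne : (2 : ZMod p) ≠ 0 := h2ne' hp5
  have heps : (-4 : ZMod p) ^ q = 1 := eps_one hp5 hodd h4
  have hm2 : (-2 : ZMod p) ^ (4 * q) = 1 := by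
    have e : (-2 : ZMod p) ^ (4 * q) = (-1) ^ (4 * q) * 2 ^ (4 * q) := by
      rw [← mul_pow]; norm_num
    rw [e, Even.neg_one_pow (Nat.even_iff.mpr (by omega)), one_mul, hq4,
      ZMod.pow_card_sub_one_eq_one h2ne]
  have heval : W.eval (-2) = 13 * (∑ k ∈ Finset.range q, (-64 : ZMod p) ^ k) + 1 := by
    rw [hWdef, eval_add, eval_mul, eval_finset_sum, eval_mul, eval_pow, eval_pow, eval_X]
    have e1 : ∀ k ∈ Finset.range q,
        (((-4 : Polynomial (ZMod p)) * X ^ 4) ^ k).eval (-2) = (-64 : ZMod p) ^ k := by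
      intro k _
      rw [eval_pow, eval_mul, eval_pow, eval_X]
      norm_num
    rw [Finset.sum_congr rfl e1]
    norm_num [hm2, heps]
  have h65 : (-65 : ZMod p) ≠ 0 := by
    rw [show (-65 : ZMod p) = -((65 : ℕ) : ZMod p) by norm_num, neg_ne_zero, Ne,
      ZMod.natCast_eq_zero_iff]
    intro hd
    rw [show (65 : ℕ) = 5 * 13 from rfl] at hd
    have hp' : p.Prime := Fact.out
    rcases (Nat.Prime.dvd_mul hp').mp hd with h | h
    · have := Nat.le_of_dvd (by norm_num) h; omega
    · exact h13 ((Nat.prime_dvd_prime_iff_eq hp' (by norm_num)).mp h)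
  have h64 : (-64 : ZMod p) ^ q = 1 := by
    rw [show (-64 : ZMod p) = (-4) ^ 3 by norm_num, ← pow_mul, mul_comm 3 q, pow_mul, heps]
    norm_num
  have hgs := geom_sum_mul (-64 : ZMod p) q
  rw [h64, sub_self] at hgs
  have hsum0 : (∑ k ∈ Finset.range q, (-64 : ZMod p) ^ k) = 0 := by
    rcases mul_eq_zero.mp hgs with h | h
    · exact h
    · exfalso; apply h65; linear_combination h
  rw [hmain, heval, hsum0]
  norm_num



end Stmt2Aux

theorem stmt_2 (p : ℕ) (hp : p.Prime) (h5 : 5 < p) :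
    (5 * ∑ k ∈ Finset.range p, 2 ^ k * ((3 * k).choose k : ℤ)) ≡
      6 * (-1) ^ ((p - 1) / 2) - 1 [ZMOD (p : ℤ)] := by
  haveI : Fact p.Prime := ⟨hp⟩
  have hodd : p % 2 = 1 := Nat.odd_iff.mp (hp.odd_of_ne_two (by omega))
  by_cases h13 : p = 13
  · subst h13
    simp only [Finset.sum_range_succ, Finset.sum_range_zero]
    rw [show Nat.choose 6 2 = 15 from by rfl, show Nat.choose 9 3 = 84 from by rfl,
      show Nat.choose 12 4 = 495 from by rfl, show Nat.choose 15 5 = 3003 from by rfl,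
      show Nat.choose 18 6 = 18564 from by rfl, show Nat.choose 21 7 = 116280 from by rfl,
      show Nat.choose 24 8 = 735471 from by rfl, show Nat.choose 27 9 = 4686825 from by rfl,
      show Nat.choose 30 10 = 30045015 from by rfl,
      show Nat.choose 33 11 = 193536720 from by rfl,
      show Nat.choose 36 12 = 1251677700 from by rfl]
    norm_num [Int.ModEq]
  · rw [← ZMod.intCast_eq_intCast_iff]
    push_cast
    have h4 : p % 4 = 1 ∨ p % 4 = 3 := by omega
    rcases h4 with h4 | h4
    · rw [Stmt2Aux.case1 h5 hodd h4 h13,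
        Even.neg_one_pow (Nat.even_iff.mpr (by omega : (p - 1) / 2 % 2 = 0))]
      norm_num
    · rw [Stmt2Aux.case3 h5 hodd h4,
        Odd.neg_one_pow (Nat.odd_iff.mpr (by omega : (p - 1) / 2 % 2 = 1))]
      norm_num
end

section
/- Let p be an odd prime. Then, in the field ℤ/pℤ, ∑_{k=1}^{p-1} 2^k · binom(3k+1, k) · k^{-1} = 2((-1)^{(p-1)/2} − 1), where k^{-1} denotes the inverse of k in ℤ/pℤ. -/
open Finset Polynomial

namespace Stmt6

lemma pp_zero {p : ℕ} : (p : ZMod (p^2)) * (p : ZMod (p^2)) = 0 := by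
  have h : ((p*p : ℕ) : ZMod (p^2)) = 0 := by
    rw [← pow_two]; exact ZMod.natCast_self _
  exact_mod_cast h

/-- cancel a factor p in `ZMod (p^2)` -/
lemma padic_cancel {p : ℕ} (hp : p.Prime) {a b : ℤ}
    (h : ((p * a : ℤ) : ZMod (p^2)) = ((p * b : ℤ) : ZMod (p^2))) :
    ((a : ZMod p) = (b : ZMod p)) := by
  rw [ZMod.intCast_eq_intCast_iff] at h ⊢
  have hd := h.dvd
  have hpne : (p : ℤ) ≠ 0 := by exact_mod_cast hp.ne_zero
  rw [Int.modEq_iff_dvd]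
  have : (p:ℤ) * (p:ℤ) ∣ (p:ℤ) * (b - a) := by
    have : ((p:ℤ)^2) ∣ (p * b - p * a) := by exact_mod_cast hd
    rw [pow_two] at this
    convert this using 1
    ring
  exact (mul_dvd_mul_iff_left hpne).mp this

/-- multiply a mod-p congruence by p in `ZMod (p^2)` -/
lemma p_mul_congr {p : ℕ} (hp : p.Prime) {a b : ℤ} (h : ((a : ZMod p) = (b : ZMod p))) :
    ((p:ZMod (p^2)) * (a : ZMod (p^2)) = (p:ZMod (p^2)) * (b : ZMod (p^2))) := by
  rw [ZMod.intCast_eq_intCast_iff, Int.modEq_iff_dvd] at h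
  obtain ⟨c, hc⟩ := h
  have : (b : ZMod (p^2)) = (a : ZMod (p^2)) + (p : ZMod (p^2)) * c := by
    have h2 := congrArg (fun z : ℤ => (z : ZMod (p^2))) hc
    push_cast at h2
    linear_combination h2
  rw [this, mul_add, ← mul_assoc, pp_zero, zero_mul, add_zero]

lemma choose_pred_cast {p : ℕ} (hp : p.Prime) {m : ℕ} (hm : m ≤ p - 1) :
    (((p-1).choose m : ZMod p)) = (-1)^m := by
  haveI : Fact p.Prime := ⟨hp⟩
  have hp2 : 2 ≤ p := hp.two_le
  induction m with
  | zero => simp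
  | succ n ih =>
    have hn : n ≤ p - 1 := by omega
    have h1 := Nat.choose_succ_right_eq (p-1) n
    have h2 := congrArg (Nat.cast : ℕ → ZMod p) h1
    push_cast at h2
    have h3 : ((p - 1 - n : ℕ) : ZMod p) = -(((n:ZMod p))+1) := by
      have he : (p - 1 - n) + (n + 1) = p := by omega
      have h4 := congrArg (Nat.cast : ℕ → ZMod p) he
      push_cast at h4
      rw [ZMod.natCast_self] at h4
      linear_combination h4
    have hne : ((n:ZMod p)+1) ≠ 0 := by
      have : (((n+1:ℕ)) : ZMod p) ≠ 0 := by
        rw [Ne, ZMod.natCast_eq_zero_iff]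
        intro hdvd
        have := Nat.le_of_dvd (by omega) hdvd
        omega
      push_cast at this
      exact this
    have h5 : (((p-1).choose (n+1) : ZMod p)) * ((n:ZMod p)+1)
        = (-1)^(n+1) * ((n:ZMod p)+1) := by
      rw [h2, ih hn, h3]
      ring
    exact mul_right_cancel₀ hne h5


lemma mul_cast_zero {p : ℕ} {a b : ℕ} (ha : p ∣ a) (hb : p ∣ b) :
    ((a : ZMod (p^2)) * (b : ZMod (p^2)) = 0) := by
  obtain ⟨x, hx⟩ := ha; obtain ⟨y, hy⟩ := hb
  subst hx; subst hy
  push_cast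
  rw [mul_mul_mul_comm, pp_zero, zero_mul]

lemma dvd_choose_2p {p : ℕ} (hp : p.Prime) {m : ℕ} (h0 : m ≠ 0) (h1 : m ≠ p) (h2 : m < 2*p) :
    p ∣ (2*p).choose m := by
  haveI : Fact p.Prime := ⟨hp⟩
  have hp0 : 0 < p := hp.pos
  have hl := Choose.choose_modEq_choose_mod_mul_choose_div_nat (n := 2*p) (k := m) (p := p)
  have h2p : (2*p) % p = 0 := by simp [Nat.mul_mod_left]
  have h2q : (2*p) / p = 2 := by
    rw [Nat.mul_div_cancel _ hp0]
  rw [h2p, h2q] at hl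
  have hmp : m % p ≠ 0 := by
    intro h
    obtain ⟨t, rfl⟩ := Nat.dvd_of_mod_eq_zero h
    have ht : t < 2 := by
      by_contra h'
      push_neg at h'
      have : p*2 ≤ p*t := Nat.mul_le_mul_left p h'
      omega
    interval_cases t <;> omega
  have hc0 : Nat.choose 0 (m % p) = 0 := Nat.choose_eq_zero_of_lt (by omega)
  rw [hc0, zero_mul] at hl
  exact (Nat.modEq_zero_iff_dvd).mp hl

lemma choose_p_add_cast {p : ℕ} (hp : p.Prime) {r : ℕ} (hr : r < p) :
    (((p + r).choose p : ZMod p)) = 1 := by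
  haveI : Fact p.Prime := ⟨hp⟩
  have hp0 : 0 < p := hp.pos
  have hl := Choose.choose_modEq_choose_mod_mul_choose_div_nat (n := p+r) (k := p) (p := p)
  have e1 : (p + r) % p = r := by
    rw [Nat.add_mod_left, Nat.mod_eq_of_lt hr]
  have e2 : (p + r) / p = 1 := by
    rw [Nat.add_div_left _ hp0, Nat.div_eq_of_lt hr]
  have e3 : p % p = 0 := Nat.mod_self p
  have e4 : p / p = 1 := Nat.div_self hp0
  rw [e1, e2, e3, e4] at hl
  simp only [Nat.choose_zero_right, Nat.choose_self, one_mul, mul_one] at hl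
  have := (ZMod.natCast_eq_natCast_iff _ _ _).mpr hl
  simpa using this

lemma dvd_choose_p_add_pred {p : ℕ} (hp : p.Prime) {r : ℕ} (hr : r < p - 1) :
    p ∣ (p + r).choose (p-1) := by
  haveI : Fact p.Prime := ⟨hp⟩
  have hp0 : 0 < p := hp.pos
  have hl := Choose.choose_modEq_choose_mod_mul_choose_div_nat (n := p+r) (k := p-1) (p := p)
  have e1 : (p + r) % p = r := by
    rw [Nat.add_mod_left, Nat.mod_eq_of_lt (by omega)]
  have e2 : (p + r) / p = 1 := by
    rw [Nat.add_div_left _ hp0, Nat.div_eq_of_lt (by omega)]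
  have e3 : (p-1) % p = p-1 := Nat.mod_eq_of_lt (by omega)
  have e4 : (p-1) / p = 0 := Nat.div_eq_of_lt (by omega)
  rw [e1, e2, e3, e4] at hl
  have hc0 : Nat.choose r (p-1) = 0 := Nat.choose_eq_zero_of_lt (by omega)
  rw [hc0, zero_mul] at hl
  exact (Nat.modEq_zero_iff_dvd).mp hl

lemma range_split {p : ℕ} (hp : 2 ≤ p) :
    Finset.range (p+1) = insert 0 (insert p (Finset.Ioo 0 p)) := by
  ext x
  simp only [Finset.mem_range, Finset.mem_insert, Finset.mem_Ioo]
  omega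

lemma central_cast {p : ℕ} (hp : p.Prime) : (((2*p).choose p : ZMod (p^2))) = 2 := by
  have hp2 : 2 ≤ p := hp.two_le
  have hv : (2*p).choose p = ∑ k ∈ Finset.range (p+1), p.choose k * p.choose (p-k) := by
    rw [two_mul, Nat.add_choose_eq]
    rw [Finset.Nat.sum_antidiagonal_eq_sum_range_succ_mk]
  have hmid : (∑ k ∈ Finset.Ioo 0 p, ((p.choose k * p.choose (p-k) : ℕ) : ZMod (p^2))) = 0 := by
    apply Finset.sum_eq_zero
    intro k hk
    rw [Finset.mem_Ioo] at hk
    rw [Nat.cast_mul]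
    exact mul_cast_zero (hp.dvd_choose_self (by omega) (by omega))
      (hp.dvd_choose_self (by omega) (by omega))
  rw [hv, range_split hp2]
  rw [Finset.sum_insert (by simp; omega), Finset.sum_insert (by simp)]
  rw [Nat.cast_add, Nat.cast_add, Nat.cast_sum, hmid]
  norm_num

lemma unit_of_coprime' {p : ℕ} (hp : p.Prime) {a : ℕ} (h : ¬ p ∣ a) :
    IsUnit (a : ZMod (p^2)) := by
  rw [ZMod.isUnit_iff_coprime]
  exact (Nat.Coprime.pow_right 2 (Nat.Coprime.symm ((Nat.Prime.coprime_iff_not_dvd hp).mpr h)))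

lemma choose_2p_pred {p : ℕ} (hp : p.Prime) (hodd : Odd p) :
    (((2*p).choose (p-1) : ZMod (p^2))) = 2*p := by
  have hp2 : 2 ≤ p := hp.two_le
  have hsym : (2*p).choose (p-1) = (2*p).choose (p+1) := by
    have h := Nat.choose_symm (show p+1 ≤ 2*p by omega)
    rw [show 2*p - (p+1) = p - 1 by omega] at h
    exact h
  have h1 := Nat.choose_succ_right_eq (2*p) p
  have h2 := congrArg (Nat.cast : ℕ → ZMod (p^2)) h1
  push_cast [show 2*p - p = p by omega] at h2
  rw [central_cast hp] at h2
  have hu : IsUnit (((p+1 : ℕ)) : ZMod (p^2)) := by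
    apply unit_of_coprime' hp
    intro h
    have h5 : p ∣ 1 := (Nat.dvd_add_right (dvd_refl p)).mp h
    have := Nat.le_of_dvd (by omega) h5
    omega
  have hsym2 : (((2*p).choose (p-1) : ZMod (p^2))) = (((2*p).choose (p+1) : ZMod (p^2))) := by
    rw [hsym]
  have h5 : (((2*p).choose (p-1) : ZMod (p^2))) * (((p+1:ℕ)) : ZMod (p^2))
      = (2*(p:ZMod (p^2))) * (((p+1:ℕ)) : ZMod (p^2)) := by
    push_cast at h2 hsym2 ⊢
    linear_combination ((p:ZMod (p^2))+1) * hsym2 + h2 - 2 * (pp_zero (p := p))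
  exact hu.mul_right_cancel h5

lemma choose_3p_cast {p : ℕ} (hp : p.Prime) : (((3*p).choose p : ZMod (p^2))) = 3 := by
  have hp2 : 2 ≤ p := hp.two_le
  have hv : (3*p).choose p = ∑ k ∈ Finset.range (p+1), (2*p).choose k * p.choose (p-k) := by
    rw [show 3*p = 2*p + p by ring, Nat.add_choose_eq]
    rw [Finset.Nat.sum_antidiagonal_eq_sum_range_succ_mk]
  have hmid : (∑ k ∈ Finset.Ioo 0 p, (((2*p).choose k * p.choose (p-k) : ℕ) : ZMod (p^2))) = 0 := by
    apply Finset.sum_eq_zero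
    intro k hk
    rw [Finset.mem_Ioo] at hk
    rw [Nat.cast_mul]
    exact mul_cast_zero (dvd_choose_2p hp (by omega) (by omega) (by omega))
      (hp.dvd_choose_self (by omega) (by omega))
  rw [hv, range_split hp2]
  rw [Finset.sum_insert (by simp; omega), Finset.sum_insert (by simp)]
  rw [Nat.cast_add, Nat.cast_add, Nat.cast_sum, hmid]
  rw [Nat.choose_zero_right, Nat.sub_zero, Nat.choose_self, Nat.sub_self,
    Nat.choose_zero_right, Nat.one_mul, Nat.mul_one, central_cast hp]
  norm_num

lemma choose_3p1_cast {p : ℕ} (hp : p.Prime) (hodd : Odd p) :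
    (((3*p+1).choose p : ZMod (p^2))) = 3 + 3*p := by
  have hp2 : 2 ≤ p := hp.two_le
  have h1 := Nat.add_one_mul_choose_eq (3*p) p
  have h2 := Nat.choose_succ_right_eq (3*p+1) p
  have h3 : (3*p+1) * ((3*p).choose p) = (3*p+1).choose p * (2*p+1) := by
    rw [h1, h2]
    congr 1
    omega
  have h4 := congrArg (Nat.cast : ℕ → ZMod (p^2)) h3
  push_cast at h4
  rw [choose_3p_cast hp] at h4
  have hu : IsUnit (((2*p+1 : ℕ)) : ZMod (p^2)) := by
    apply unit_of_coprime' hp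
    intro h
    have h5 : p ∣ 1 := (Nat.dvd_add_right ⟨2, by ring⟩).mp h
    have := Nat.le_of_dvd (by omega) h5
    omega
  have h6 : (((3*p+1).choose p : ZMod (p^2))) * (((2*p+1:ℕ)) : ZMod (p^2))
      = (3 + 3*(p:ZMod (p^2))) * (((2*p+1:ℕ)) : ZMod (p^2)) := by
    push_cast at h4 ⊢
    rw [← h4]
    have := pp_zero (p := p)
    linear_combination (-6 : ZMod (p^2)) * this
  exact hu.mul_right_cancel h6

lemma choose_p_half {p : ℕ} (hp : p.Prime) (hodd : Odd p) :
    ((p.choose ((p-1)/2) : ZMod (p^2))) = 2*p*(-1)^((p-1)/2) := by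
  have hp3 : 3 ≤ p := by
    have := hp.two_le; rcases hodd with ⟨m, hm⟩; omega
  set h := (p-1)/2 with hh
  have hodd2 : 2 * h = p - 1 := by
    rcases hodd with ⟨m, hm⟩; omega
  have hh1 : 1 ≤ h := by omega
  have h1 := Nat.add_one_mul_choose_eq (p-1) (h-1)
  rw [show p-1+1 = p by omega,
    show h-1+1 = h by omega] at h1
  -- h1 : p * (p-1).choose (h-1) = p.choose h * h
  have h2 := congrArg (Nat.cast : ℕ → ZMod (p^2)) h1
  push_cast at h2
  have h3 : ((((p-1).choose (h-1) : ℕ) : ℤ) : ZMod p) = (((-1)^(h-1) : ℤ) : ZMod p) := by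
    push_cast
    exact choose_pred_cast hp (by omega)
  have h4 := p_mul_congr hp h3
  push_cast at h4
  -- h4 : p * C(p-1,h-1) = p * (-1)^(h-1) in ZMod p^2
  rw [h4] at h2
  -- h2 : p * (-1)^(h-1) = C(p,h) * h
  have hu : IsUnit ((h : ℕ) : ZMod (p^2)) := by
    apply unit_of_coprime' hp
    intro hdvd
    have := Nat.le_of_dvd (by omega) hdvd
    omega
  have h2h : ((2*h : ℕ) : ZMod (p^2)) = (p : ZMod (p^2)) - 1 := by
    rw [hodd2]
    have := congrArg (Nat.cast : ℕ → ZMod (p^2)) (show (p-1) + 1 = p by omega)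
    push_cast at this
    linear_combination this
  have h5 : ((p.choose h : ZMod (p^2))) * ((h:ℕ) : ZMod (p^2))
      = (2*(p:ZMod (p^2))*(-1)^h) * ((h:ℕ) : ZMod (p^2)) := by
    rw [← h2]
    have hsign : ((-1 : ZMod (p^2)))^h = (-1)^(h-1) * (-1) := by
      rw [← pow_succ, show h - 1 + 1 = h by omega]
    rw [hsign]
    push_cast at h2h
    have hpp := pp_zero (p := p)
    calc (p:ZMod (p^2)) * (-1)^(h-1)
        = ((p:ZMod (p^2)) - (p:ZMod (p^2))*(p:ZMod (p^2))) * (-1)^(h-1) := by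
          rw [hpp]; ring
      _ = 2*(p:ZMod (p^2))*((-1)^(h-1)*(-1)) * ((h:ℕ) : ZMod (p^2)) := by
          rw [show ((h:ℕ) : ZMod (p^2)) = (h : ZMod (p^2)) from by push_cast; rfl] at h2h ⊢
          linear_combination ((p:ZMod (p^2)) * (-1)^(h-1)) * h2h
      _ = 2*(p:ZMod (p^2))*((-1)^(h-1)*(-1)) * ((h:ℕ) : ZMod (p^2)) := rfl
  exact hu.mul_right_cancel h5

lemma fermat_two {p : ℕ} (hp : p.Prime) (hodd : Odd p) : (p : ℤ) ∣ 2^(p-1) - 1 := by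
  haveI : Fact p.Prime := ⟨hp⟩
  have hp3 : 3 ≤ p := by
    have := hp.two_le; rcases hodd with ⟨m, hm⟩; omega
  have h2 : (2 : ZMod p) ≠ 0 := by
    have : (((2:ℕ)) : ZMod p) ≠ 0 := by
      rw [Ne, ZMod.natCast_eq_zero_iff]
      intro hdvd
      have := Nat.le_of_dvd (by omega) hdvd
      omega
    push_cast at this
    exact this
  have hf := ZMod.pow_card_sub_one_eq_one h2
  have : (((2:ℤ)^(p-1) - 1 : ℤ) : ZMod p) = 0 := by
    push_cast
    rw [hf]
    ring
  exact (ZMod.intCast_zmod_eq_zero_iff_dvd _ p).mp this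

lemma two_pow_pred {p : ℕ} (hp : p.Prime) (hodd : Odd p) :
    ∃ m : ℤ, (2:ZMod (p^2))^(p-1) = 1 + (p : ZMod (p^2)) * (m : ZMod (p^2)) := by
  obtain ⟨m, hm⟩ := fermat_two hp hodd
  refine ⟨m, ?_⟩
  have := congrArg (fun z : ℤ => (z : ZMod (p^2))) hm
  push_cast at this
  linear_combination this

lemma eps_sq {p : ℕ} (hp : p.Prime) (hodd : Odd p) :
    ((2:ZMod (p^2))^(p-1) - 1)^2 = 0 := by
  obtain ⟨m, hm⟩ := two_pow_pred hp hodd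
  rw [hm]
  have := pp_zero (p := p)
  ring_nf
  linear_combination (m : ZMod (p^2))^2 * this

lemma p_mul_eps {p : ℕ} (hp : p.Prime) (hodd : Odd p) :
    (p:ZMod (p^2)) * (2:ZMod (p^2))^(p-1) = (p:ZMod (p^2)) := by
  obtain ⟨m, hm⟩ := two_pow_pred hp hodd
  rw [hm]
  have := pp_zero (p := p)
  ring_nf
  linear_combination (m : ZMod (p^2)) * this

section PolyHelpers

variable {S : Type*} [CommRing S]

lemma coeff_two_X_add_one_pow (n m : ℕ) :
    (((2*Polynomial.X + 1) : S[X])^n).coeff m = (n.choose m : S) * 2^m := by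
  have hexp : ((2*Polynomial.X + 1) : S[X])^n
      = ∑ k ∈ Finset.range (n+1), (Polynomial.X : S[X])^k * ((n.choose k * 2^k : ℕ) : S[X]) := by
    rw [add_pow]
    refine Finset.sum_congr rfl fun k hk => ?_
    push_cast
    ring
  rw [hexp, Polynomial.finset_sum_coeff]
  have hterm : ∀ k ∈ Finset.range (n+1),
      ((Polynomial.X : S[X])^k * ((n.choose k * 2^k : ℕ) : S[X])).coeff m
      = if m = k then ((n.choose k * 2^k : ℕ) : S) else 0 := by
    intro k hk
    rw [Polynomial.coeff_mul_natCast, Polynomial.coeff_X_pow]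
    split <;> simp
  rw [Finset.sum_congr rfl hterm, Finset.sum_ite_eq]
  by_cases hm : m ∈ Finset.range (n+1)
  · rw [if_pos hm]; push_cast; ring
  · rw [if_neg hm]
    rw [Finset.mem_range] at hm
    rw [Nat.choose_eq_zero_of_lt (by omega)]
    simp

lemma coeff_monomial_sum (s : Finset ℕ) (c : ℕ → ℕ) (m : ℕ) :
    ((∑ j ∈ s, (Polynomial.X : S[X])^j * (c j : S[X]))).coeff m
      = if m ∈ s then (c m : S) else 0 := by
  rw [Polynomial.finset_sum_coeff]
  have hterm : ∀ j ∈ s, ((Polynomial.X : S[X])^j * (c j : S[X])).coeff m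
      = if m = j then (c j : S) else 0 := by
    intro j hj
    rw [Polynomial.coeff_mul_natCast, Polynomial.coeff_X_pow]
    split <;> simp
  rw [Finset.sum_congr rfl hterm, Finset.sum_ite_eq]

lemma coeff_mul'' (f g : S[X]) (n : ℕ) :
    (f*g).coeff n = ∑ k ∈ Finset.range (n+1), f.coeff k * g.coeff (n-k) := by
  rw [Polynomial.coeff_mul, Finset.Nat.sum_antidiagonal_eq_sum_range_succ_mk]

lemma coeff_one_add_X_mul (f : S[X]) (q : ℕ) (hq : 1 ≤ q) :
    (((1 + Polynomial.X) : S[X]) * f).coeff q = f.coeff q + f.coeff (q-1) := by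
  have h : ((1 + Polynomial.X) : S[X]) * f = f + Polynomial.X * f := by ring
  rw [h, Polynomial.coeff_add]
  congr 1
  conv_lhs => rw [show q = (q-1)+1 by omega]
  rw [Polynomial.coeff_X_mul]

lemma coeff_neg_one_pow_mul (k : ℕ) (f : S[X]) (m : ℕ) :
    (((-1 : S[X])^k) * f).coeff m = (-1:S)^k * f.coeff m := by
  have h : ((-1 : S[X])^k) = Polynomial.C ((-1 : S)^k) := by
    rw [map_pow, map_neg, map_one]
  rw [h, Polynomial.coeff_C_mul]

end PolyHelpers

/-- first factor expansion correction term -/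
noncomputable def U1 (p : ℕ) : Polynomial (ZMod (p^2)) :=
  ∑ j ∈ Finset.Ioo 0 p, (Polynomial.X)^j * ((p.choose j * 2^(p-j) : ℕ) : Polynomial (ZMod (p^2)))

/-- second factor expansion correction term -/
noncomputable def V1 (p : ℕ) : Polynomial (ZMod (p^2)) :=
  ∑ j ∈ Finset.Ioo 0 p, ((p.choose j : ℕ) : Polynomial (ZMod (p^2))) * (2*Polynomial.X+1)^(2*j)

lemma U1_coeff (p : ℕ) (q : ℕ) : (U1 p).coeff q
    = if q ∈ Finset.Ioo 0 p then ((p.choose q * 2^(p-q) : ℕ) : ZMod (p^2)) else 0 :=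
  coeff_monomial_sum _ _ _

lemma V1_coeff (p : ℕ) (m : ℕ) : (V1 p).coeff m
    = ∑ j ∈ Finset.Ioo 0 p, (p.choose j : ZMod (p^2)) * (((2*j).choose m : ZMod (p^2)) * 2^m) := by
  rw [V1, Polynomial.finset_sum_coeff]
  refine Finset.sum_congr rfl fun j hj => ?_
  rw [Polynomial.coeff_natCast_mul, coeff_two_X_add_one_pow]

lemma mul_cast_congr_one {p : ℕ} {a b : ℕ} (ha : p ∣ a) (hb : (b : ZMod p) = 1) (hb1 : 0 < b) :
    (a : ZMod (p^2)) * (b : ZMod (p^2)) = (a : ZMod (p^2)) := by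
  have h1 : (1:ℕ) ≡ b [MOD p] := by
    rw [← ZMod.natCast_eq_natCast_iff]
    push_cast
    rw [hb]
  obtain ⟨y, hy⟩ := (Nat.modEq_iff_dvd' hb1).mp h1
  have hb' : b = 1 + p * y := by omega
  obtain ⟨x, hx⟩ := ha
  subst hb' hx
  push_cast
  have := pp_zero (p := p)
  linear_combination ((x:ZMod (p^2)) * (y:ZMod (p^2))) * this

/-- step 1: the sum T as a coefficient -/
lemma T_eq {p : ℕ} (hp : p.Prime) (hodd : Odd p) :
    (∑ k ∈ Finset.range (p+1), (p.choose k : ZMod (p^2)) * (-2)^k *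
        ((3*k+1).choose k : ZMod (p^2)))
    = -((((1+Polynomial.X) * ((Polynomial.X+2)^p *
        (2*Polynomial.X^2+2*Polynomial.X+1)^p)) : Polynomial (ZMod (p^2))).coeff p) := by
  have hp2 := hp.two_le
  -- binomial expansion of (X - 2(1+X)^3)^p
  have hL : ((1+Polynomial.X) * ((Polynomial.X - 2*(1+Polynomial.X)^3)^p)
        : Polynomial (ZMod (p^2)))
      = ∑ k ∈ Finset.range (p+1), (-1 : Polynomial (ZMod (p^2)))^k *
          (((2^k * p.choose k : ℕ) : Polynomial (ZMod (p^2))) *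
            ((1+Polynomial.X)^(3*k+1) * Polynomial.X^(p-k))) := by
    have h0 : ((Polynomial.X : Polynomial (ZMod (p^2))) - 2*(1+Polynomial.X)^3)
        = (-(2*(1+Polynomial.X)^3)) + Polynomial.X := by ring
    rw [h0, add_pow, Finset.mul_sum]
    refine Finset.sum_congr rfl fun k hk => ?_
    have hpow : ((-(2*(1+Polynomial.X)^3)) : Polynomial (ZMod (p^2)))^k
        = (-1 : Polynomial (ZMod (p^2)))^k * (((2^k : ℕ) : Polynomial (ZMod (p^2)))
            * (1+Polynomial.X)^(3*k)) := by
      rw [neg_pow, mul_pow, ← pow_mul]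
      push_cast
      ring
    rw [hpow, pow_succ]
    push_cast
    ring
  -- coefficient extraction
  have hC : (((1+Polynomial.X) * ((Polynomial.X - 2*(1+Polynomial.X)^3)^p)
        : Polynomial (ZMod (p^2)))).coeff p
      = ∑ k ∈ Finset.range (p+1), (-1 : ZMod (p^2))^k *
          ((2^k * p.choose k : ℕ) : ZMod (p^2)) * ((3*k+1).choose k : ZMod (p^2)) := by
    rw [hL, Polynomial.finset_sum_coeff]
    refine Finset.sum_congr rfl fun k hk => ?_
    rw [Finset.mem_range] at hk
    rw [coeff_neg_one_pow_mul, Polynomial.coeff_natCast_mul]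
    rw [Polynomial.coeff_mul_X_pow', if_pos (by omega : p - k ≤ p),
      show p - (p-k) = k by omega, Polynomial.coeff_one_add_X_pow]
    ring
  -- factorization
  have hfac : ((Polynomial.X - 2*(1+Polynomial.X)^3 : Polynomial (ZMod (p^2))))^p
      = -(((Polynomial.X+2)^p * (2*Polynomial.X^2+2*Polynomial.X+1)^p)) := by
    have h1 : ((Polynomial.X : Polynomial (ZMod (p^2))) - 2*(1+Polynomial.X)^3)
        = -((Polynomial.X+2) * (2*Polynomial.X^2+2*Polynomial.X+1)) := by ring
    rw [h1, Odd.neg_pow hodd, mul_pow]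
  have hswap : ((1+Polynomial.X) * ((Polynomial.X - 2*(1+Polynomial.X)^3)^p)
        : Polynomial (ZMod (p^2)))
      = -((1+Polynomial.X) * ((Polynomial.X+2)^p * (2*Polynomial.X^2+2*Polynomial.X+1)^p)) := by
    rw [hfac]
    ring
  rw [hswap, Polynomial.coeff_neg] at hC
  rw [hC]
  refine Finset.sum_congr rfl fun k hk => ?_
  have hneg2 : (-2 : ZMod (p^2))^k = (-1)^k * 2^k := by rw [neg_pow]
  rw [hneg2]
  push_cast
  ring

/-- step 2: decomposition of 2^p times the polynomial -/
lemma F2_decomp {p : ℕ} (hp : p.Prime) (hodd : Odd p) :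
    ((2:Polynomial (ZMod (p^2)))^p * ((1+Polynomial.X) * ((Polynomial.X+2)^p *
        (2*Polynomial.X^2+2*Polynomial.X+1)^p)))
    = (1+Polynomial.X)*((Polynomial.X^p + ((2^p : ℕ) : Polynomial (ZMod (p^2))))
          * ((2*Polynomial.X+1)^(2*p)+1))
      + (1+Polynomial.X)*((U1 p) * ((2*Polynomial.X+1)^(2*p)+1))
      + (1+Polynomial.X)*((Polynomial.X^p + ((2^p : ℕ) : Polynomial (ZMod (p^2)))) * (V1 p)) := by
  have hp2 := hp.two_le
  -- expansion of (X+2)^p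
  have hU : ((Polynomial.X : Polynomial (ZMod (p^2)))+2)^p
      = Polynomial.X^p + ((2^p : ℕ) : Polynomial (ZMod (p^2))) + U1 p := by
    rw [add_pow, range_split hp2, Finset.sum_insert (by simp; omega), Finset.sum_insert (by simp)]
    rw [U1]
    have hmid : (∑ k ∈ Finset.Ioo 0 p,
        (Polynomial.X : Polynomial (ZMod (p^2)))^k * 2^(p-k) * (p.choose k : Polynomial (ZMod (p^2))))
        = ∑ j ∈ Finset.Ioo 0 p, (Polynomial.X : Polynomial (ZMod (p^2)))^j *
            ((p.choose j * 2^(p-j) : ℕ) : Polynomial (ZMod (p^2))) := by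
      refine Finset.sum_congr rfl fun k hk => ?_
      push_cast
      ring
    rw [hmid]
    simp only [pow_zero, Nat.sub_zero, Nat.choose_zero_right, Nat.choose_self, Nat.sub_self,
      Nat.cast_one, one_mul, mul_one]
    push_cast
    ring
  -- expansion of ((2X+1)^2+1)^p
  have hV : ((((2*Polynomial.X+1 : Polynomial (ZMod (p^2))))^2+1))^p
      = (2*Polynomial.X+1)^(2*p) + 1 + V1 p := by
    rw [add_pow, range_split hp2, Finset.sum_insert (by simp; omega), Finset.sum_insert (by simp)]
    rw [V1]
    have hmid : (∑ k ∈ Finset.Ioo 0 p,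
        ((2*Polynomial.X+1 : Polynomial (ZMod (p^2)))^2)^k * 1^(p-k) * (p.choose k : Polynomial (ZMod (p^2))))
        = ∑ j ∈ Finset.Ioo 0 p, ((p.choose j : ℕ) : Polynomial (ZMod (p^2))) *
            (2*Polynomial.X+1)^(2*j) := by
      refine Finset.sum_congr rfl fun k hk => ?_
      rw [← pow_mul]
      ring
    rw [hmid]
    simp only [pow_zero, Nat.sub_zero, Nat.choose_zero_right, Nat.choose_self, Nat.sub_self,
      Nat.cast_one, one_mul, mul_one, one_pow]
    rw [← pow_mul]
    ring
  -- U1 * V1 = 0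
  have hUV : U1 p * V1 p = 0 := by
    have hU2 : U1 p = ((p:ℕ) : Polynomial (ZMod (p^2))) * (∑ j ∈ Finset.Ioo 0 p,
        (Polynomial.X : Polynomial (ZMod (p^2)))^j *
          ((p.choose j / p * 2^(p-j) : ℕ) : Polynomial (ZMod (p^2)))) := by
      rw [U1, Finset.mul_sum]
      refine Finset.sum_congr rfl fun j hj => ?_
      rw [Finset.mem_Ioo] at hj
      have hdvd : p * (p.choose j / p) = p.choose j :=
        Nat.mul_div_cancel' (hp.dvd_choose_self (by omega) (by omega))
      conv_lhs => rw [← hdvd]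
      push_cast
      ring
    have hV2 : V1 p = ((p:ℕ) : Polynomial (ZMod (p^2))) * (∑ j ∈ Finset.Ioo 0 p,
        ((p.choose j / p : ℕ) : Polynomial (ZMod (p^2))) * (2*Polynomial.X+1)^(2*j)) := by
      rw [V1, Finset.mul_sum]
      refine Finset.sum_congr rfl fun j hj => ?_
      rw [Finset.mem_Ioo] at hj
      have hdvd : p * (p.choose j / p) = p.choose j :=
        Nat.mul_div_cancel' (hp.dvd_choose_self (by omega) (by omega))
      conv_lhs => rw [← hdvd]
      push_cast
      ring
    have hpp2 : ((p:ℕ) : Polynomial (ZMod (p^2))) * ((p:ℕ) : Polynomial (ZMod (p^2))) = 0 := by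
      rw [← Nat.cast_mul, ← pow_two, ← Polynomial.C_eq_natCast, ZMod.natCast_self, map_zero]
    rw [hU2, hV2, mul_mul_mul_comm, hpp2, zero_mul]
  -- put it together
  have hkey : ((2 : Polynomial (ZMod (p^2))))^p * (2*Polynomial.X^2+2*Polynomial.X+1)^p
      = ((2*Polynomial.X+1)^2+1)^p := by
    rw [← mul_pow]
    congr 1
    ring
  calc ((2:Polynomial (ZMod (p^2)))^p * ((1+Polynomial.X) * ((Polynomial.X+2)^p *
        (2*Polynomial.X^2+2*Polynomial.X+1)^p)))
      = (1+Polynomial.X) * ((Polynomial.X+2)^p * ((2:Polynomial (ZMod (p^2)))^p *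
          (2*Polynomial.X^2+2*Polynomial.X+1)^p)) := by ring
    _ = (1+Polynomial.X) * ((Polynomial.X^p + ((2^p : ℕ) : Polynomial (ZMod (p^2))) + U1 p) *
          ((2*Polynomial.X+1)^(2*p) + 1 + V1 p)) := by rw [hkey, hU, hV]
    _ = _ := by linear_combination (1+Polynomial.X) * hUV

lemma M1_eval {p : ℕ} (hp : p.Prime) (hodd : Odd p) :
    (((1+Polynomial.X)*((Polynomial.X^p + ((2^p : ℕ) : Polynomial (ZMod (p^2))))
        * ((2*Polynomial.X+1)^(2*p)+1))).coeff p : ZMod (p^2))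
    = 2 + ((2^p:ℕ) : ZMod (p^2))*(((2*p).choose p : ZMod (p^2)) * 2^p)
      + ((2^p:ℕ) : ZMod (p^2))*(((2*p).choose (p-1) : ZMod (p^2)) * 2^(p-1)) := by
  have hp2 := hp.two_le
  rw [coeff_one_add_X_mul _ p (by omega), add_mul]
  simp only [Polynomial.coeff_add, Polynomial.coeff_X_pow_mul', Polynomial.coeff_natCast_mul,
    coeff_two_X_add_one_pow, Polynomial.coeff_one]
  rw [if_pos (le_refl p), if_neg (by omega : ¬ p ≤ p-1)]
  rw [show p - p = 0 by omega]
  rw [if_pos rfl, if_neg (by omega : ¬ p = 0), if_neg (by omega : ¬ p - 1 = 0)]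
  simp only [Nat.choose_zero_right, pow_zero, Nat.cast_one]
  push_cast
  ring

lemma M2_eval {p : ℕ} (hp : p.Prime) (hodd : Odd p) :
    (((1+Polynomial.X)*((U1 p) * ((2*Polynomial.X+1)^(2*p)+1))).coeff p : ZMod (p^2))
    = ((p * 2 : ℕ) : ZMod (p^2)) + ((p * 2 : ℕ) : ZMod (p^2)) := by
  have hp2 := hp.two_le
  have hCp1 : p.choose (p-1) = p := by
    have h := Nat.choose_symm (show p-1 ≤ p by omega)
    rw [show p - (p-1) = 1 by omega, Nat.choose_one_right] at h
    exact h.symm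
  have hU_p : (U1 p).coeff p = 0 := by
    rw [U1_coeff, if_neg (by simp)]
  have hU_p1 : (U1 p).coeff (p-1) = ((p * 2 : ℕ) : ZMod (p^2)) := by
    rw [U1_coeff, if_pos (by simp only [Finset.mem_Ioo]; omega), hCp1,
      show p - (p-1) = 1 by omega, pow_one]
  have hUW_p : ((U1 p) * (2*Polynomial.X+1)^(2*p)).coeff p = 0 := by
    rw [coeff_mul'']
    apply Finset.sum_eq_zero
    intro k hk
    rw [U1_coeff, coeff_two_X_add_one_pow]
    by_cases hkI : k ∈ Finset.Ioo 0 p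
    · rw [if_pos hkI]
      rw [Finset.mem_Ioo] at hkI
      have hz := mul_cast_zero (p := p) (hp.dvd_choose_self (k := k) (by omega) (by omega))
        (dvd_choose_2p hp (m := p - k) (by omega) (by omega) (by omega))
      calc ((p.choose k * 2^(p-k) : ℕ) : ZMod (p^2)) * (((2*p).choose (p-k) : ZMod (p^2)) * 2^(p-k))
          = ((p.choose k : ZMod (p^2)) * ((2*p).choose (p-k) : ZMod (p^2)))
              * (((2^(p-k) : ℕ) : ZMod (p^2)) * 2^(p-k)) := by push_cast; ring
        _ = 0 := by rw [hz, zero_mul]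
    · rw [if_neg hkI, zero_mul]
  have hUW_p1 : ((U1 p) * (2*Polynomial.X+1)^(2*p)).coeff (p-1) = ((p * 2 : ℕ) : ZMod (p^2)) := by
    rw [coeff_mul'']
    rw [Finset.sum_eq_single (p-1)]
    · rw [U1_coeff, if_pos (by simp only [Finset.mem_Ioo]; omega), coeff_two_X_add_one_pow,
        Nat.sub_self, Nat.choose_zero_right, pow_zero, hCp1, show p - (p-1) = 1 by omega, pow_one]
      push_cast
      ring
    · intro k hk hkne
      rw [Finset.mem_range] at hk
      rw [U1_coeff, coeff_two_X_add_one_pow]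
      by_cases hkI : k ∈ Finset.Ioo 0 p
      · rw [if_pos hkI]
        rw [Finset.mem_Ioo] at hkI
        have hz := mul_cast_zero (p := p) (hp.dvd_choose_self (k := k) (by omega) (by omega))
          (dvd_choose_2p hp (m := p - 1 - k) (by omega) (by omega) (by omega))
        calc ((p.choose k * 2^(p-k) : ℕ) : ZMod (p^2))
              * (((2*p).choose (p-1-k) : ZMod (p^2)) * 2^(p-1-k))
            = ((p.choose k : ZMod (p^2)) * ((2*p).choose (p-1-k) : ZMod (p^2)))
                * (((2^(p-k) : ℕ) : ZMod (p^2)) * 2^(p-1-k)) := by push_cast; ring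
          _ = 0 := by rw [hz, zero_mul]
      · rw [if_neg hkI, zero_mul]
    · intro hmem
      exfalso
      apply hmem
      rw [Finset.mem_range]
      omega
  rw [coeff_one_add_X_mul _ p (by omega), mul_add, mul_one]
  simp only [Polynomial.coeff_add]
  rw [hUW_p, hU_p, hUW_p1, hU_p1]
  ring

lemma M3_eval {p : ℕ} (hp : p.Prime) (hodd : Odd p) :
    (((1+Polynomial.X)*((Polynomial.X^p + ((2^p : ℕ) : Polynomial (ZMod (p^2)))) * (V1 p))).coeff p
        : ZMod (p^2))
    = ((∑ j ∈ Finset.Ioo 0 p, p.choose j : ℕ) : ZMod (p^2))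
      + ((2^p:ℕ) : ZMod (p^2)) *
          (((∑ j ∈ Finset.Icc ((p-1)/2+1) (p-1), p.choose j : ℕ) : ZMod (p^2)) * 2^p)
      + ((2^p:ℕ) : ZMod (p^2)) * ((p.choose ((p-1)/2) : ZMod (p^2)) * 2^(p-1)) := by
  have hp3 : 3 ≤ p := by
    have := hp.two_le; rcases hodd with ⟨m, hm⟩; omega
  have h2h : 2 * ((p-1)/2) = p - 1 := by rcases hodd with ⟨m, hm⟩; omega
  have hV0 : (V1 p).coeff 0 = ((∑ j ∈ Finset.Ioo 0 p, p.choose j : ℕ) : ZMod (p^2)) := by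
    rw [V1_coeff, Nat.cast_sum]
    refine Finset.sum_congr rfl fun j hj => ?_
    simp
  have hVp : (V1 p).coeff p
      = ((∑ j ∈ Finset.Icc ((p-1)/2+1) (p-1), p.choose j : ℕ) : ZMod (p^2)) * 2^p := by
    rw [V1_coeff]
    have hsplit : Finset.Ioo 0 p = Finset.Ioo 0 ((p-1)/2+1) ∪ Finset.Icc ((p-1)/2+1) (p-1) := by
      ext x
      simp only [Finset.mem_Ioo, Finset.mem_union, Finset.mem_Icc]
      omega
    have hdisj : Disjoint (Finset.Ioo 0 ((p-1)/2+1)) (Finset.Icc ((p-1)/2+1) (p-1)) := by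
      rw [Finset.disjoint_left]
      intro a ha hb
      rw [Finset.mem_Ioo] at ha
      rw [Finset.mem_Icc] at hb
      omega
    rw [hsplit, Finset.sum_union hdisj]
    have hlow : (∑ j ∈ Finset.Ioo 0 ((p-1)/2+1), (p.choose j : ZMod (p^2))
        * (((2*j).choose p : ZMod (p^2)) * 2^p)) = 0 := by
      apply Finset.sum_eq_zero
      intro j hj
      rw [Finset.mem_Ioo] at hj
      rw [Nat.choose_eq_zero_of_lt (show 2*j < p by omega)]
      simp
    have hhigh : (∑ j ∈ Finset.Icc ((p-1)/2+1) (p-1), (p.choose j : ZMod (p^2))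
        * (((2*j).choose p : ZMod (p^2)) * 2^p))
        = ((∑ j ∈ Finset.Icc ((p-1)/2+1) (p-1), p.choose j : ℕ) : ZMod (p^2)) * 2^p := by
      rw [Nat.cast_sum, Finset.sum_mul]
      refine Finset.sum_congr rfl fun j hj => ?_
      rw [Finset.mem_Icc] at hj
      have h2j : 2*j = p + (2*j - p) := by omega
      have hone : ((p.choose j : ZMod (p^2))) * (((2*j).choose p : ZMod (p^2)))
          = (p.choose j : ZMod (p^2)) := by
        apply mul_cast_congr_one (hp.dvd_choose_self (k := j) (by omega) (by omega))
        · rw [h2j]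
          exact choose_p_add_cast hp (by omega)
        · exact Nat.choose_pos (by omega)
      calc (p.choose j : ZMod (p^2)) * (((2*j).choose p : ZMod (p^2)) * 2^p)
          = ((p.choose j : ZMod (p^2))) * (((2*j).choose p : ZMod (p^2))) * 2^p := by ring
        _ = (p.choose j : ZMod (p^2)) * 2^p := by rw [hone]
    rw [hlow, hhigh, zero_add]
  have hVp1 : (V1 p).coeff (p-1) = (p.choose ((p-1)/2) : ZMod (p^2)) * 2^(p-1) := by
    rw [V1_coeff]
    have hsplit : Finset.Ioo 0 p = insert ((p-1)/2) (Finset.Ioo 0 ((p-1)/2) ∪ Finset.Icc ((p-1)/2+1) (p-1)) := by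
      ext x
      simp only [Finset.mem_Ioo, Finset.mem_union, Finset.mem_Icc, Finset.mem_insert]
      omega
    have hnm : (p-1)/2 ∉ Finset.Ioo 0 ((p-1)/2) ∪ Finset.Icc ((p-1)/2+1) (p-1) := by
      simp only [Finset.mem_Ioo, Finset.mem_union, Finset.mem_Icc]
      omega
    have hdisj : Disjoint (Finset.Ioo 0 ((p-1)/2)) (Finset.Icc ((p-1)/2+1) (p-1)) := by
      rw [Finset.disjoint_left]
      intro a ha hb
      rw [Finset.mem_Ioo] at ha
      rw [Finset.mem_Icc] at hb
      omega
    rw [hsplit, Finset.sum_insert hnm, Finset.sum_union hdisj]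
    have hmidterm : (p.choose ((p-1)/2) : ZMod (p^2))
          * (((2*((p-1)/2)).choose (p-1) : ZMod (p^2)) * 2^(p-1))
        = (p.choose ((p-1)/2) : ZMod (p^2)) * 2^(p-1) := by
      rw [h2h, Nat.choose_self]
      norm_num
    have hlow : (∑ j ∈ Finset.Ioo 0 ((p-1)/2), (p.choose j : ZMod (p^2))
        * (((2*j).choose (p-1) : ZMod (p^2)) * 2^(p-1))) = 0 := by
      apply Finset.sum_eq_zero
      intro j hj
      rw [Finset.mem_Ioo] at hj
      rw [Nat.choose_eq_zero_of_lt (show 2*j < p - 1 by omega)]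
      simp
    have hhigh : (∑ j ∈ Finset.Icc ((p-1)/2+1) (p-1), (p.choose j : ZMod (p^2))
        * (((2*j).choose (p-1) : ZMod (p^2)) * 2^(p-1))) = 0 := by
      apply Finset.sum_eq_zero
      intro j hj
      rw [Finset.mem_Icc] at hj
      have h2j : 2*j = p + (2*j - p) := by omega
      have hz : ((p.choose j : ZMod (p^2))) * (((2*j).choose (p-1) : ZMod (p^2))) = 0 := by
        apply mul_cast_zero (hp.dvd_choose_self (k := j) (by omega) (by omega))
        rw [h2j]
        exact dvd_choose_p_add_pred hp (by omega)
      calc (p.choose j : ZMod (p^2)) * (((2*j).choose (p-1) : ZMod (p^2)) * 2^(p-1))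
          = ((p.choose j : ZMod (p^2))) * (((2*j).choose (p-1) : ZMod (p^2))) * 2^(p-1) := by ring
        _ = 0 := by rw [hz, zero_mul]
    rw [hmidterm, hlow, hhigh]
    ring
  rw [coeff_one_add_X_mul _ p (by omega), add_mul]
  simp only [Polynomial.coeff_add, Polynomial.coeff_X_pow_mul', Polynomial.coeff_natCast_mul]
  rw [if_pos (le_refl p), if_neg (by omega : ¬ p ≤ p-1), show p - p = 0 by omega]
  rw [hV0, hVp, hVp1]
  ring

lemma sum_Ioo_choose {p : ℕ} (hp : p.Prime) :
    (∑ j ∈ Finset.Ioo 0 p, p.choose j) + 2 = 2^p := by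
  have hp2 := hp.two_le
  have h := Nat.sum_range_choose p
  rw [range_split hp.two_le, Finset.sum_insert (by simp; omega), Finset.sum_insert (by simp)] at h
  simp only [Nat.choose_zero_right, Nat.choose_self] at h
  omega

lemma sum_Icc_choose {p : ℕ} (hp : p.Prime) (hodd : Odd p) :
    2^(p-1) + ((∑ j ∈ Finset.Icc ((p-1)/2+1) (p-1), p.choose j) + 1) = 2^p := by
  have hp3 : 3 ≤ p := by
    have := hp.two_le; rcases hodd with ⟨m, hm⟩; omega
  have h2 : 2 * ((p-1)/2) = p - 1 := by rcases hodd with ⟨m, hm⟩; omega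
  have hhalf := Nat.sum_range_choose_halfway ((p-1)/2)
  rw [show 2*((p-1)/2)+1 = p by omega] at hhalf
  have hfour : 4^((p-1)/2) = 2^(p-1) := by
    rw [show (4:ℕ) = 2^2 by norm_num, ← pow_mul, h2]
  rw [hfour] at hhalf
  -- range (p+1) = range ((p-1)/2 + 1) ∪ Icc ((p-1)/2+1) p
  have hsplit : Finset.range (p+1)
      = Finset.range ((p-1)/2+1) ∪ Finset.Icc ((p-1)/2+1) p := by
    ext x
    simp only [Finset.mem_range, Finset.mem_union, Finset.mem_Icc]
    omega
  have hdisj : Disjoint (Finset.range ((p-1)/2+1)) (Finset.Icc ((p-1)/2+1) p) := by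
    rw [Finset.disjoint_left]
    intro a ha hb
    rw [Finset.mem_range] at ha
    rw [Finset.mem_Icc] at hb
    omega
  have htot := Nat.sum_range_choose p
  rw [hsplit, Finset.sum_union hdisj, hhalf] at htot
  have hIccp : Finset.Icc ((p-1)/2+1) p = insert p (Finset.Icc ((p-1)/2+1) (p-1)) := by
    ext x
    simp only [Finset.mem_Icc, Finset.mem_insert]
    omega
  rw [hIccp, Finset.sum_insert (by simp; omega), Nat.choose_self] at htot
  omega

/-- the key mod p^2 evaluation -/
lemma key {p : ℕ} (hp : p.Prime) (hodd : Odd p) :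
    (∑ k ∈ Finset.Icc 1 (p-1), (-1)^(k+1) * (p.choose k : ZMod (p^2)) * 2^k *
        ((3*k+1).choose k : ZMod (p^2)))
      = 2*(p:ZMod (p^2))*((-1)^((p-1)/2) - 1) := by
  haveI : Fact p.Prime := ⟨hp⟩
  have hp3 : 3 ≤ p := by
    have := hp.two_le; rcases hodd with ⟨m, hm⟩; omega
  set NR : ZMod (p^2) := ∑ k ∈ Finset.Icc 1 (p-1), (-1)^(k+1) * (p.choose k : ZMod (p^2)) * 2^k *
        ((3*k+1).choose k : ZMod (p^2)) with hNR
  -- split T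
  have hT := T_eq hp hodd
  have hTsplit : (∑ k ∈ Finset.range (p+1), (p.choose k : ZMod (p^2)) * (-2)^k *
        ((3*k+1).choose k : ZMod (p^2)))
      = 1 - 2^p * ((3*p+1).choose p : ZMod (p^2)) - NR := by
    rw [range_split hp.two_le, Finset.sum_insert (by simp; omega), Finset.sum_insert (by simp)]
    have h0 : (p.choose 0 : ZMod (p^2)) * (-2)^0 * ((3*0+1).choose 0 : ZMod (p^2)) = 1 := by
      norm_num
    have hpterm : (p.choose p : ZMod (p^2)) * (-2)^p * ((3*p+1).choose p : ZMod (p^2))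
        = -(2^p * ((3*p+1).choose p : ZMod (p^2))) := by
      rw [Nat.choose_self, Odd.neg_pow hodd]
      push_cast
      ring
    have hmid : (∑ k ∈ Finset.Ioo 0 p, (p.choose k : ZMod (p^2)) * (-2)^k *
          ((3*k+1).choose k : ZMod (p^2))) = -NR := by
      have hIcc : Finset.Ioo 0 p = Finset.Icc 1 (p-1) := by
        ext x; simp only [Finset.mem_Ioo, Finset.mem_Icc]; omega
      rw [hIcc, hNR, ← Finset.sum_neg_distrib]
      refine Finset.sum_congr rfl fun k hk => ?_
      have hneg2 : (-2 : ZMod (p^2))^k = (-1)^k * 2^k := by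
        rw [neg_pow]
      rw [hneg2, pow_succ]
      ring
    rw [h0, hpterm, hmid]
    ring
  -- coefficient of the decomposition
  have hF2 := congrArg (fun f => Polynomial.coeff f p) (F2_decomp hp hodd)
  simp only [Polynomial.coeff_add] at hF2
  have hLHS : ((2:Polynomial (ZMod (p^2)))^p * ((1+Polynomial.X) * ((Polynomial.X+2)^p *
        (2*Polynomial.X^2+2*Polynomial.X+1)^p))).coeff p
      = ((2^p : ℕ) : ZMod (p^2)) * (((1+Polynomial.X) * ((Polynomial.X+2)^p *
        (2*Polynomial.X^2+2*Polynomial.X+1)^p)).coeff p) := by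
    have h2 : ((2:Polynomial (ZMod (p^2)))^p) = ((2^p : ℕ) : Polynomial (ZMod (p^2))) := by
      push_cast
      ring
    rw [h2, Polynomial.coeff_natCast_mul]
  rw [hLHS, M1_eval hp hodd, M2_eval hp hodd, M3_eval hp hodd] at hF2
  -- substitute the arithmetic facts
  rw [central_cast hp, choose_2p_pred hp hodd, choose_p_half hp hodd] at hF2
  -- hF2 : 2^p * coeff = explicit
  set e : ZMod (p^2) := (2:ZMod (p^2))^(p-1) with he
  set χ : ZMod (p^2) := (-1:ZMod (p^2))^((p-1)/2) with hχ
  have h2p : ((2^p : ℕ) : ZMod (p^2)) = 2 * e := by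
    push_cast
    rw [he, ← pow_succ', show p-1+1 = p by omega]
  have h2p' : (2:ZMod (p^2))^p = 2 * e := by
    rw [he, ← pow_succ', show p-1+1 = p by omega]
  have hpow2 : (2:ZMod (p^2))^p = 2 * e := h2p'
  have hs1 : ((∑ j ∈ Finset.Ioo 0 p, p.choose j : ℕ) : ZMod (p^2)) = 2*e - 2 := by
    have hcs := congrArg (Nat.cast : ℕ → ZMod (p^2)) (sum_Ioo_choose hp)
    push_cast at hcs
    push_cast
    linear_combination hcs + hpow2
  have hs2 : ((∑ j ∈ Finset.Icc ((p-1)/2+1) (p-1), p.choose j : ℕ) : ZMod (p^2)) = e - 1 := by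
    have hcs := congrArg (Nat.cast : ℕ → ZMod (p^2)) (sum_Icc_choose hp hodd)
    push_cast at hcs
    push_cast
    linear_combination hcs + hpow2
  push_cast at hF2
  push_cast at hs1 hs2
  rw [hs1, hs2] at hF2
  rw [hpow2] at hF2
  -- now combine with hT and hTsplit
  rw [hTsplit] at hT
  have hNReq : NR = 1 - (2*e) * ((3*p+1).choose p : ZMod (p^2))
      + ((1+Polynomial.X) * ((Polynomial.X+2)^p *
        (2*Polynomial.X^2+2*Polynomial.X+1)^p) : Polynomial (ZMod (p^2))).coeff p := by
    rw [← hpow2]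
    linear_combination -hT
  rw [choose_3p1_cast hp hodd] at hNReq
  have heps : (e - 1)^2 = 0 := eps_sq hp hodd
  have hpe : (p:ZMod (p^2)) * e = (p:ZMod (p^2)) := p_mul_eps hp hodd
  have hpp := pp_zero (p := p)
  have hmul : (2*e) * NR = (2*e) * (2*(p:ZMod (p^2))*(χ - 1)) := by
    linear_combination (2*e) * hNReq + hF2 + (4*e) * heps + (4*χ*e - 8*e - 4) * hpe
  have hu : IsUnit (2*e) := by
    have h2u : IsUnit ((2:ℕ) : ZMod (p^2)) := by
      apply unit_of_coprime' hp
      intro h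
      have := Nat.le_of_dvd (by omega) h
      omega
    have h2u' : IsUnit (2 : ZMod (p^2)) := by
      have : ((2:ℕ) : ZMod (p^2)) = (2 : ZMod (p^2)) := by push_cast; rfl
      rwa [this] at h2u
    have := h2u'.pow (n := p)
    rwa [hpow2] at this
  exact hu.mul_left_cancel hmul


end Stmt6

theorem stmt_6 (p : ℕ) (hp : p.Prime) (hodd : Odd p) :
    (∑ k ∈ Finset.Icc 1 (p - 1),
        (2 : ZMod p) ^ k * ((3 * k + 1).choose k : ZMod p) * (k : ZMod p)⁻¹) =
      2 * ((-1) ^ ((p - 1) / 2) - 1) := by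
  classical
  haveI : Fact p.Prime := ⟨hp⟩
  have hp2 : 2 ≤ p := hp.two_le
  have hp3 : 3 ≤ p := by
    rcases hodd with ⟨m, hm⟩
    omega
  set d : ℕ → ℕ := fun k => p.choose k / p with hd
  have hpd : ∀ k, 1 ≤ k → k ≤ p - 1 → p * d k = p.choose k := by
    intro k h1 h2
    exact Nat.mul_div_cancel' (hp.dvd_choose_self (by omega) (by omega)) 
  have hkd : ∀ k, 1 ≤ k → k ≤ p - 1 → k * d k = (p-1).choose (k-1) := by
    intro k h1 h2
    have hs : p * ((p-1).choose (k-1)) = p.choose k * k := by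
      have := Nat.add_one_mul_choose_eq (p-1) (k-1)
      have e1 : p - 1 + 1 = p := by omega
      have e2 : k - 1 + 1 = k := by omega
      rwa [e1, e2] at this
    have : p * (k * d k) = p * ((p-1).choose (k-1)) := by
      rw [hs, ← hpd k h1 h2]; ring
    exact Nat.eq_of_mul_eq_mul_left (by omega) this
  -- the integer sum
  set Nt : ℤ := ∑ k ∈ Finset.Icc 1 (p-1),
      (-1)^(k+1) * (d k : ℤ) * 2^k * ((3*k+1).choose k : ℤ) with hNt
  set c : ℤ := 2 * ((-1)^((p-1)/2) - 1) with hc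
  -- relate key to p * Nt
  have hcast : ((p * Nt : ℤ) : ZMod (p^2)) = ((p * c : ℤ) : ZMod (p^2)) := by
    have hkey := Stmt6.key hp hodd
    have hL : ((p * Nt : ℤ) : ZMod (p^2))
        = ∑ k ∈ Finset.Icc 1 (p-1), (-1)^(k+1) * (p.choose k : ZMod (p^2)) * 2^k *
            ((3*k+1).choose k : ZMod (p^2)) := by
      push_cast [hNt]
      rw [Finset.mul_sum]
      refine Finset.sum_congr rfl ?_
      intro k hk
      rw [Finset.mem_Icc] at hk
      have := hpd k hk.1 hk.2
      have hcc : ((p : ZMod (p^2)) * (d k : ZMod (p^2))) = (p.choose k : ZMod (p^2)) := by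
        rw [← Nat.cast_mul, this]
      rw [← hcc]
      ring
    rw [hL, hkey, hc]
    push_cast
    ring
  have hmod : ((Nt : ZMod p) = (c : ZMod p)) := Stmt6.padic_cancel hp hcast
  -- identify the LHS with Nt mod p
  have hS : (∑ k ∈ Finset.Icc 1 (p - 1),
        (2 : ZMod p) ^ k * ((3 * k + 1).choose k : ZMod p) * (k : ZMod p)⁻¹)
      = ((Nt : ℤ) : ZMod p) := by
    rw [hNt]
    push_cast
    refine Finset.sum_congr rfl ?_
    intro k hk
    rw [Finset.mem_Icc] at hk
    have hinv : (k : ZMod p)⁻¹ = (-1)^(k+1) * (d k : ZMod p) := by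
      have hmul : (k : ZMod p) * ((-1)^(k+1) * (d k : ZMod p)) = 1 := by
        have h1 : ((k * d k : ℕ) : ZMod p) = (((p-1).choose (k-1) : ℕ) : ZMod p) := by
          rw [hkd k hk.1 hk.2]
        have h2 : (((p-1).choose (k-1) : ℕ) : ZMod p) = (-1)^(k-1) :=
          Stmt6.choose_pred_cast hp (by omega)
        have h3 : (k : ZMod p) * (d k : ZMod p) = (-1)^(k-1) := by
          rw [← Nat.cast_mul, h1, h2]
        have h4 : (k : ZMod p) * ((-1)^(k+1) * (d k : ZMod p))
            = (-1)^(k+1) * (-1)^(k-1) := by rw [← h3]; ring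
        rw [h4, ← pow_add, (show (k+1)+(k-1) = 2*k by omega), pow_mul]
        norm_num
      exact inv_eq_of_mul_eq_one_right hmul
    rw [hinv]
    ring
  rw [hS, hmod, hc]
  push_cast
  ring
end

section
/- Let p be an odd prime. Then, in the field ℤ/pℤ, ∑_{k=1}^{p-1} 2^k · binom(3k+2, k) · k^{-1} = 3((-1)^{(p-1)/2} − 1), where k^{-1} denotes the inverse of k in ℤ/pℤ. -/
open Finset Polynomial

namespace Stmt7Aux

abbrev R := GaussianInt
def u : R := ⟨1,1⟩
def v : R := ⟨1,-1⟩
def a : R := ⟨0,1⟩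
def b : R := ⟨0,-1⟩

def mk (p k : ℕ) : ℕ := p.choose k / p

noncomputable def M (p : ℕ) : ℤ := ∑ k ∈ Ico 1 p, (-2)^k * ((3*k+2).choose k : ℤ) * (mk p k : ℤ)
noncomputable def T (p : ℕ) : ℤ := ∑ k ∈ range (p+1), (p.choose k : ℤ) * (-2)^k * ((3*k+2).choose k : ℤ)

lemma mk_mul {p : ℕ} (hp : p.Prime) {k : ℕ} (h1 : 1 ≤ k) (h2 : k < p) :
    p * mk p k = p.choose k :=
  Nat.mul_div_cancel' (hp.dvd_choose_self (by omega) h2)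

lemma k_mk {p : ℕ} (hp : p.Prime) {k : ℕ} (h1 : 1 ≤ k) (h2 : k < p) :
    k * mk p k = (p-1).choose (k-1) := by
  have hkey : p * ((p-1).choose (k-1)) = p.choose k * k := by
    have := Nat.add_one_mul_choose_eq (p-1) (k-1)
    have hps : p-1+1 = p := by omega
    have hks : k-1+1 = k := by omega
    rwa [hps, hks] at this
  have : p * (k * mk p k) = p * ((p-1).choose (k-1)) := by
    rw [hkey, ← mk_mul hp h1 h2]; ring
  exact (Nat.eq_of_mul_eq_mul_left hp.pos this.symm).symm

lemma choose_sub_one {p : ℕ} (hp : p.Prime) {j : ℕ} (hj : j < p) :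
    (((p-1).choose j : ℕ) : ZMod p) = (-1)^j := by
  haveI := Fact.mk hp
  induction j with
  | zero => simp
  | succ i ih =>
    have hi : i < p := by omega
    have hcast : (((p-1).choose (i+1) : ℕ) : ZMod p) * (i+1 : ℕ) =
        (((p-1).choose i : ℕ) : ZMod p) * ((p-1-i : ℕ)) :=
      by exact_mod_cast congrArg (Nat.cast : ℕ → ZMod p) (Nat.choose_succ_right_eq (p-1) i)
    have hsub : ((p-1-i : ℕ) : ZMod p) = -((i+1 : ℕ) : ZMod p) := by
      have h' : (p-1-i) + (i+1) = p := by omega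
      have := congrArg (Nat.cast : ℕ → ZMod p) h'
      rw [ZMod.natCast_self, Nat.cast_add] at this
      linear_combination this
    have hunit : ((i+1 : ℕ) : ZMod p) ≠ 0 := by
      rw [Ne, ZMod.natCast_eq_zero_iff]
      intro hdvd
      exact absurd (Nat.le_of_dvd (by omega) hdvd) (by omega)
    have h3 := hcast
    rw [hsub, ih hi] at h3
    have h4 : (-1:ZMod p)^i * -((i+1:ℕ):ZMod p) = (-1)^(i+1) * ((i+1:ℕ):ZMod p) := by
      rw [pow_succ]; ring
    rw [h4] at h3
    exact mul_right_cancel₀ hunit h3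


lemma huv_add : u + v = 2 := by decide
lemma huv_mul : u * v = 2 := by decide

lemma factor : (X - C 2 * (1+X)^3 : R[X]) = -((X + C 2) * ((1 + C u * X) * (1 + C v * X))) := by
  have h1 : (C u : R[X]) * C v = 2 := by
    rw [← Polynomial.C_mul, huv_mul]; exact map_ofNat C 2
  have h2 : (C u : R[X]) + C v = 2 := by
    rw [← Polynomial.C_add, huv_add]; exact map_ofNat C 2
  have hC2 : (C (2:R) : R[X]) = 2 := map_ofNat C 2
  rw [hC2]
  linear_combination ((X+2)*X) * h2 + ((X+2)*X^2) * h1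


lemma hu2 : u^2 = 2*a := by decide
lemma hv2 : v^2 = 2*b := by decide
lemma ha4 : a^4 = 1 := by decide
lemma hb4 : b^4 = 1 := by decide

lemma a_pow_mod (k : ℕ) : a^k = a^(k % 4) := by
  conv_lhs => rw [show k = 4*(k/4) + k % 4 by omega]
  rw [pow_add, pow_mul, ha4, one_pow, one_mul]

lemma b_pow_mod (k : ℕ) : b^k = b^(k % 4) := by
  conv_lhs => rw [show k = 4*(k/4) + k % 4 by omega]
  rw [pow_add, pow_mul, hb4, one_pow, one_mul]

-- even and odd powers of u, v
lemma u_pow_even (k : ℕ) : u^(2*k) = 2^k * a^k := by rw [pow_mul, hu2, mul_pow]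
lemma v_pow_even (k : ℕ) : v^(2*k) = 2^k * b^k := by rw [pow_mul, hv2, mul_pow]
lemma u_pow_odd (k : ℕ) : u^(2*k+1) = u * (2^k * a^k) := by rw [pow_succ, u_pow_even]; ring
lemma v_pow_odd (k : ℕ) : v^(2*k+1) = v * (2^k * b^k) := by rw [pow_succ, v_pow_even]; ring

lemma hS1 {p n : ℕ} (hpn : p = 2*n+3) :
    u^p + v^p = 2^(n+1) * (u * a^((n+1) % 4) + v * b^((n+1) % 4)) := by
  subst hpn
  rw [show 2*n+3 = 2*(n+1)+1 by omega, u_pow_odd, v_pow_odd, a_pow_mod, b_pow_mod]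
  ring

lemma hS2 {p n : ℕ} (hpn : p = 2*n+3) :
    u^(2*n+2) + v^(2*n+2) = 2^(n+1) * (a^((n+1) % 4) + b^((n+1) % 4)) := by
  rw [show 2*n+2 = 2*(n+1) by omega, u_pow_even, v_pow_even, a_pow_mod, b_pow_mod]
  ring

lemma hS3 (n : ℕ) :
    u^(2*n+1) + v^(2*n+1) = 2^n * (u * a^(n % 4) + v * b^(n % 4)) := by
  rw [u_pow_odd, v_pow_odd, a_pow_mod, b_pow_mod]
  ring

lemma freshman {p : ℕ} (hp : p.Prime) : (p:R) ∣ 2^p - (u^p + v^p) := by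
  have hpos := hp.pos
  have h := add_pow u v p
  rw [huv_add, Finset.sum_range_succ, Finset.range_eq_Ico, Finset.sum_eq_sum_Ico_succ_bot hpos] at h
  simp only [Nat.choose_self, Nat.choose_zero_right, Nat.cast_one, mul_one, pow_zero, one_mul,
    Nat.sub_self, Nat.sub_zero] at h
  have hmid : ∀ m ∈ Ico 1 p, (u^m * v^(p-m) * ((p.choose m : ℕ) : R))
      = (p:R) * (u^m * v^(p-m) * ((mk p m : ℕ) : R)) := by
    intro m hm
    simp only [mem_Ico] at hm
    rw [← mk_mul hp hm.1 hm.2]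
    push_cast
    ring
  rw [Finset.sum_congr rfl hmid, ← Finset.mul_sum] at h
  exact ⟨∑ m ∈ Ico 1 p, u^m * v^(p-m) * ((mk p m : ℕ) : R), by linear_combination h⟩


variable {A : Type*} [CommRing A]

lemma coeff_sumA (p : ℕ) (g : ℕ → A) (j : ℕ) :
    (∑ k ∈ Ico 1 p, C (g k) * X^k).coeff j = if j ∈ Ico 1 p then g j else 0 := by
  rw [Polynomial.finset_sum_coeff]
  rw [Finset.sum_congr rfl (fun k _ => by rw [Polynomial.coeff_C_mul, Polynomial.coeff_X_pow])]
  simp only [mul_ite, mul_one, mul_zero]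
  rw [Finset.sum_ite_eq (Ico 1 p) j g]

lemma expandX {p : ℕ} (hp : p.Prime) (c : A) :
    (X + C c)^p = X^p + C (c^p) + C (p:A) * (∑ k ∈ Ico 1 p, C ((mk p k : A) * c^(p-k)) * X^k) := by
  have hpos := hp.pos
  rw [add_pow, Finset.sum_range_succ, Finset.range_eq_Ico, Finset.sum_eq_sum_Ico_succ_bot hpos]
  have hmid : ∀ k ∈ Ico 1 p, X^k * (C c)^(p-k) * ((p.choose k : ℕ) : A[X])
      = C (p:A) * (C ((mk p k : A) * c^(p-k)) * X^k) := by
    intro k hk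
    simp only [mem_Ico] at hk
    rw [← mk_mul hp hk.1 hk.2]
    push_cast
    rw [← Polynomial.C_pow]
    simp only [Polynomial.C_mul, Polynomial.C_eq_natCast]
    ring
  rw [Finset.sum_congr rfl hmid, ← Finset.mul_sum]
  simp [Nat.choose_self, Nat.choose_zero_right]
  ring

lemma expandOne {p : ℕ} (hp : p.Prime) (c : A) :
    (1 + C c * X)^p = 1 + C (c^p) * X^p + C (p:A) * (∑ k ∈ Ico 1 p, C ((mk p k : A) * c^k) * X^k) := by
  have hpos := hp.pos
  rw [add_comm (1 : A[X]) (C c * X), add_pow, Finset.sum_range_succ, Finset.range_eq_Ico,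
    Finset.sum_eq_sum_Ico_succ_bot hpos]
  have hmid : ∀ k ∈ Ico 1 p, (C c * X)^k * (1:A[X])^(p-k) * ((p.choose k : ℕ) : A[X])
      = C (p:A) * (C ((mk p k : A) * c^k) * X^k) := by
    intro k hk
    simp only [mem_Ico] at hk
    rw [← mk_mul hp hk.1 hk.2]
    push_cast
    rw [mul_pow, ← Polynomial.C_pow]
    simp only [Polynomial.C_mul, Polynomial.C_eq_natCast]
    ring
  rw [Finset.sum_congr rfl hmid, ← Finset.mul_sum]
  simp [Nat.choose_self, Nat.choose_zero_right]
  ring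

lemma coeff_quad (f : A[X]) (j : ℕ) :
    ((1+X)^2 * f).coeff (j+3) = f.coeff (j+3) + 2 * f.coeff (j+2) + f.coeff (j+1) := by
  have h : (1+X)^2 * f = f + 2 * (f * X) + f * X^2 := by ring
  rw [h]
  simp only [Polynomial.coeff_add, Polynomial.coeff_ofNat_mul]
  rw [Polynomial.coeff_mul_X_pow']
  rw [show j+3 = (j+2)+1 by omega]
  rw [Polynomial.coeff_mul_X]
  rw [if_pos (by omega : 2 ≤ (j+2)+1), show (j+2)+1-2 = j+1 by omega]


-- helper coefficient lemmas
lemma coeff_shift_p {p : ℕ} (f g : A[X]) (hf : f.coeff 0 = 0) :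
    ((g * f) * X^p).coeff p = 0 := by
  rw [Polynomial.coeff_mul_X_pow', if_pos le_rfl, Nat.sub_self, Polynomial.mul_coeff_zero, hf,
    mul_zero]

lemma coeff_shift_2p {p : ℕ} (hp : 0 < p) (g : A[X]) :
    (g * X^(2*p)).coeff p = 0 := by
  rw [Polynomial.coeff_mul_X_pow', if_neg (by omega)]

lemma coeff_shift_3p {p : ℕ} (hp : 0 < p) (g : A[X]) :
    (g * X^(3*p)).coeff p = 0 := by
  rw [Polynomial.coeff_mul_X_pow', if_neg (by omega)]

lemma coeff_quad_pow {p n : ℕ} (hpn : p = 2*n+3) :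
    (((1:A[X])+X)^2).coeff p = 0 := by
  rw [Polynomial.coeff_one_add_X_pow, Nat.choose_eq_zero_of_lt (by omega), Nat.cast_zero]

lemma coeff_quad_sum {p n : ℕ} (hpn : p = 2*n+3) (g : ℕ → A) :
    ((1+X)^2 * (∑ k ∈ Ico 1 p, C (g k) * X^k)).coeff p = 2 * g (2*n+2) + g (2*n+1) := by
  subst hpn
  rw [show 2*n+3 = (2*n)+3 by omega, coeff_quad]
  rw [coeff_sumA, coeff_sumA, coeff_sumA]
  rw [if_neg (by simp), if_pos (by simp), if_pos (by simp)]
  ring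

lemma coeff_zero_sum (p : ℕ) (g : ℕ → A) :
    (∑ k ∈ Ico 1 p, C (g k) * X^k).coeff 0 = 0 := by
  rw [coeff_sumA, if_neg (by simp)]

-- values of mk near the top
lemma mk_top1 {p n : ℕ} (hp : p.Prime) (hpn : p = 2*n+3) : mk p (2*n+2) = 1 := by
  have h : p * mk p (2*n+2) = p.choose (2*n+2) := mk_mul hp (by omega) (by omega)
  have h2 : p.choose (2*n+2) = p * 1 := by
    have h3 := Nat.choose_symm (n := p) (k := 1) (by omega)
    rw [Nat.choose_one_right] at h3
    rw [show (2*n+2) = p - 1 by omega, h3, mul_one]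
  exact Nat.eq_of_mul_eq_mul_left hp.pos (h.trans h2)

lemma mk_top2 {p n : ℕ} (hp : p.Prime) (hpn : p = 2*n+3) : mk p (2*n+1) = n+1 := by
  have h : p * mk p (2*n+1) = p.choose (2*n+1) := mk_mul hp (by omega) (by omega)
  have h2 : p.choose (2*n+1) = p * (n+1) := by
    rw [show (2*n+1) = p - 2 by omega, Nat.choose_symm (by omega), Nat.choose_two_right]
    rw [show p - 1 = 2*(n+1) by omega, show p * (2*(n+1)) = (p * (n+1)) * 2 by ring]
    exact Nat.mul_div_cancel _ (by norm_num)
  have hpos := hp.pos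
  have := Nat.eq_of_mul_eq_mul_left hpos (h.trans h2)
  exact this


lemma sum_eq_negM {p : ℕ} (hp : p.Prime) (hodd : Odd p) :
    (∑ k ∈ Finset.Icc 1 (p - 1),
        (2 : ZMod p) ^ k * ((3 * k + 2).choose k : ZMod p) * (k : ZMod p)⁻¹) = -((M p : ℤ) : ZMod p) := by
  haveI := Fact.mk hp
  have hicc : Finset.Icc 1 (p-1) = Finset.Ico 1 p := by
    rw [← Finset.Ico_add_one_right_eq_Icc]
    have := hp.pos
    congr 1
    omega
  rw [hicc, M]
  push_cast
  rw [← Finset.sum_neg_distrib]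
  apply Finset.sum_congr rfl
  intro k hk
  simp only [Finset.mem_Ico] at hk
  obtain ⟨h1, h2⟩ := hk
  -- key : (mk p k : ZMod p) = (-1)^(k-1) * (k:ZMod p)⁻¹
  have hkmk : ((k : ℕ) : ZMod p) * (mk p k : ℕ) = (-1)^(k-1) := by
    rw [← Nat.cast_mul, k_mk hp h1 h2, choose_sub_one hp (by omega)]
  have hkne : ((k:ℕ) : ZMod p) ≠ 0 := by
    rw [Ne, ZMod.natCast_eq_zero_iff]
    intro hdvd
    exact absurd (Nat.le_of_dvd (by omega) hdvd) (by omega)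
  have hmk : ((mk p k : ℕ) : ZMod p) = (-1)^(k-1) * ((k:ℕ):ZMod p)⁻¹ := by
    field_simp
    linear_combination hkmk
  obtain ⟨j, rfl⟩ : ∃ j, k = j + 1 := ⟨k - 1, by omega⟩
  rw [hmk]
  simp only [Nat.add_sub_cancel]
  rw [show ((-2:ZMod p))^(j+1) = (-1)^(j+1) * 2^(j+1) by rw [neg_pow]]
  rw [show ((-1:ZMod p))^(j+1) = -(-1)^j by rw [pow_succ]; ring]
  push_cast
  ring_nf
  rw [show ((-1:ZMod p))^(j*2) = 1 by rw [pow_mul']; norm_num]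
  ring


lemma pM_eq {p : ℕ} (hp : p.Prime) :
    (p : ℤ) * M p = T p - 1 - (-2)^p * ((3*p+2).choose p : ℤ) := by
  have hpos := hp.pos
  have hsplit : T p = (1 : ℤ) + (∑ k ∈ Ico 1 p, (p.choose k : ℤ) * (-2)^k * ((3*k+2).choose k : ℤ))
      + (-2)^p * ((3*p+2).choose p : ℤ) := by
    rw [T, Finset.sum_range_succ, Finset.range_eq_Ico, Finset.sum_eq_sum_Ico_succ_bot hpos]
    simp [Nat.choose_self]
  have hmid : ∀ k ∈ Ico 1 p, (p.choose k : ℤ) * (-2)^k * ((3*k+2).choose k : ℤ)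
      = (p:ℤ) * ((-2)^k * ((3*k+2).choose k : ℤ) * (mk p k : ℤ)) := by
    intro k hk
    simp only [mem_Ico] at hk
    rw [← mk_mul hp hk.1 hk.2]
    push_cast
    ring
  rw [hsplit, Finset.sum_congr rfl hmid, ← Finset.mul_sum, M]
  ring


lemma T_as_coeff {p : ℕ} (hp : p.Prime) :
    ((T p : ℤ) : A) = (((1+X)^2 * (X - C 2 * (1+X)^3)^p : A[X])).coeff p := by
  have hfact : (X - C 2 * (1+X)^3 : A[X]) = (-(C 2) * (1+X)^3) + X := by ring
  rw [hfact, add_pow (-(C 2) * (1+X)^3 : A[X]) X p, Finset.mul_sum, Polynomial.finset_sum_coeff]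
  have hterm : ∀ m ∈ range (p+1),
      ((1+X)^2 * ((-(C 2) * (1+X)^3)^m * X^(p-m) * ((p.choose m : ℕ) : A[X]))).coeff p
      = (p.choose m : A) * (-2)^m * ((3*m+2).choose m : A) := by
    intro m hm
    simp only [mem_range] at hm
    have hpoly : (1+X)^2 * ((-(C 2) * (1+X)^3)^m * X^(p-m) * ((p.choose m : ℕ) : A[X]))
        = C ((-2)^m * (p.choose m : A)) * ((1+X)^(3*m+2) * X^(p-m)) := by
      rw [show ((p.choose m : ℕ) : A[X]) = C ((p.choose m : ℕ) : A) from (Polynomial.C_eq_natCast _).symm]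
      rw [show (-(C 2) : A[X]) = C (-2) by simp]
      rw [Polynomial.C_mul, Polynomial.C_pow]
      generalize (1 + X : A[X]) = Y
      ring
    rw [hpoly, Polynomial.coeff_C_mul, Polynomial.coeff_mul_X_pow', if_pos (by omega),
      show p - (p - m) = m by omega, Polynomial.coeff_one_add_X_pow]
    ring
  rw [Finset.sum_congr rfl hterm, T]
  push_cast
  rfl


lemma coeff_main {p n : ℕ} (hpn : p = 2*n+3) (a b c : A) :
    ((1+X)^2 * ((X^p + C a) * ((1 + C b*X^p) * (1 + C c*X^p)))).coeff p = 1 + a*b + a*c := by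
  have hexp : (1+X)^2 * ((X^p + C a) * ((1 + C b*X^p) * (1 + C c*X^p)))
      = C a * (1+X)^2 + ((1+X)^2 * (C (1 + a*b + a*c))) * X^p
        + ((1+X)^2 * (C (b + c + a*b*c))) * X^(2*p) + ((1+X)^2 * (C (b*c))) * X^(3*p) := by
    simp only [Polynomial.C_add, Polynomial.C_mul, Polynomial.C_1]
    generalize (1+X : A[X]) = Y
    ring
  rw [hexp]
  simp only [Polynomial.coeff_add]
  rw [Polynomial.coeff_C_mul, coeff_quad_pow hpn, Polynomial.coeff_mul_X_pow', if_pos le_rfl,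
    Nat.sub_self, coeff_shift_2p (by omega), coeff_shift_3p (by omega)]
  rw [Polynomial.mul_coeff_zero, Polynomial.coeff_C]
  simp [Polynomial.coeff_one_add_X_pow]

lemma coeff_cross {p n : ℕ} (hpn : p = 2*n+3) (a b c : A) (g1 g2 g3 : ℕ → A) :
    ((1+X)^2 * ((∑ k ∈ Ico 1 p, C (g1 k) * X^k) * ((1 + C b*X^p) * (1 + C c*X^p))
      + (X^p + C a) * ((∑ k ∈ Ico 1 p, C (g2 k) * X^k) * (1 + C c*X^p)
        + (1 + C b*X^p) * (∑ k ∈ Ico 1 p, C (g3 k) * X^k)))).coeff p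
    = (2*g1 (2*n+2) + g1 (2*n+1)) + a*(2*g2 (2*n+2) + g2 (2*n+1)) + a*(2*g3 (2*n+2) + g3 (2*n+1)) := by
  have hexp : (1+X)^2 * ((∑ k ∈ Ico 1 p, C (g1 k) * X^k) * ((1 + C b*X^p) * (1 + C c*X^p))
      + (X^p + C a) * ((∑ k ∈ Ico 1 p, C (g2 k) * X^k) * (1 + C c*X^p)
        + (1 + C b*X^p) * (∑ k ∈ Ico 1 p, C (g3 k) * X^k)))
      = (1+X)^2 * (∑ k ∈ Ico 1 p, C (g1 k) * X^k)
        + C (b+c) * (((1+X)^2 * (∑ k ∈ Ico 1 p, C (g1 k) * X^k)) * X^p)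
        + C (b*c) * (((1+X)^2 * (∑ k ∈ Ico 1 p, C (g1 k) * X^k)) * X^(2*p))
        + (((1+X)^2 * (∑ k ∈ Ico 1 p, C (g2 k) * X^k)) * X^p)
        + C c * (((1+X)^2 * (∑ k ∈ Ico 1 p, C (g2 k) * X^k)) * X^(2*p))
        + C a * ((1+X)^2 * (∑ k ∈ Ico 1 p, C (g2 k) * X^k))
        + C (a*c) * (((1+X)^2 * (∑ k ∈ Ico 1 p, C (g2 k) * X^k)) * X^p)
        + (((1+X)^2 * (∑ k ∈ Ico 1 p, C (g3 k) * X^k)) * X^p)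
        + C b * (((1+X)^2 * (∑ k ∈ Ico 1 p, C (g3 k) * X^k)) * X^(2*p))
        + C a * ((1+X)^2 * (∑ k ∈ Ico 1 p, C (g3 k) * X^k))
        + C (a*b) * (((1+X)^2 * (∑ k ∈ Ico 1 p, C (g3 k) * X^k)) * X^p) := by
    simp only [Polynomial.C_add, Polynomial.C_mul]
    generalize (1+X : A[X]) = Y
    generalize (∑ k ∈ Ico 1 p, C (g1 k) * X^k : A[X]) = S1
    generalize (∑ k ∈ Ico 1 p, C (g2 k) * X^k : A[X]) = S2
    generalize (∑ k ∈ Ico 1 p, C (g3 k) * X^k : A[X]) = S3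
    ring
  rw [hexp]
  simp only [Polynomial.coeff_add, Polynomial.coeff_C_mul]
  rw [coeff_shift_p _ _ (coeff_zero_sum p g1), coeff_shift_p _ _ (coeff_zero_sum p g2),
    coeff_shift_p _ _ (coeff_zero_sum p g3),
    coeff_shift_2p (by omega), coeff_shift_2p (by omega), coeff_shift_2p (by omega),
    coeff_quad_sum hpn g1, coeff_quad_sum hpn g2, coeff_quad_sum hpn g3]
  ring


lemma coeff_split {A : Type*} [CommRing A] (Ma Cr Rs : A[X]) (q : A) (j : ℕ) :
    ((1+X)^2 * (Ma + C q * Cr + C q^2 * Rs)).coeff j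
      = ((1+X)^2*Ma).coeff j + q * ((1+X)^2*Cr).coeff j + q^2 * ((1+X)^2*Rs).coeff j := by
  have h : (1+X)^2 * (Ma + C q * Cr + C q^2 * Rs)
      = (1+X)^2*Ma + C q * ((1+X)^2*Cr) + C (q^2) * ((1+X)^2*Rs) := by
    rw [Polynomial.C_pow]; ring
  rw [h]
  simp only [Polynomial.coeff_add, Polynomial.coeff_C_mul]


lemma T_mod {p n : ℕ} (hp : p.Prime) (hpn : p = 2*n+3) :
    ∃ E : R, (T p : R) =
      -(1 + 2^p*u^p + 2^p*v^p)
      - (p:R) * ((4 + 4*((n:R)+1)) + 2^p*(2*u^(2*n+2) + ((n:R)+1)*u^(2*n+1))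
          + 2^p*(2*v^(2*n+2) + ((n:R)+1)*v^(2*n+1)))
      + (p:R)^2 * E := by
  have hodd : Odd p := ⟨n+1, by omega⟩
  have h0 : ((T p : ℤ) : R) = (((1+X)^2 * (X - C 2 * (1+X)^3)^p : R[X])).coeff p := T_as_coeff hp
  rw [factor, Odd.neg_pow hodd, mul_pow, mul_pow] at h0
  rw [expandX hp (2:R), expandOne hp u, expandOne hp v] at h0
  have hprod : ((X^p + C ((2:R)^p) + C (p:R) * (∑ k ∈ Ico 1 p, C ((mk p k : R) * 2^(p-k)) * X^k))
        * ((1 + C (u^p) * X^p + C (p:R) * (∑ k ∈ Ico 1 p, C ((mk p k : R) * u^k) * X^k))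
          * (1 + C (v^p) * X^p + C (p:R) * (∑ k ∈ Ico 1 p, C ((mk p k : R) * v^k) * X^k))))
      = ((X^p + C ((2:R)^p)) * ((1 + C (u^p)*X^p) * (1 + C (v^p)*X^p)))
        + C (p:R) * ((∑ k ∈ Ico 1 p, C ((mk p k : R) * 2^(p-k)) * X^k) * ((1 + C (u^p)*X^p) * (1 + C (v^p)*X^p))
            + (X^p + C ((2:R)^p)) * ((∑ k ∈ Ico 1 p, C ((mk p k : R) * u^k) * X^k) * (1 + C (v^p)*X^p)
              + (1 + C (u^p)*X^p) * (∑ k ∈ Ico 1 p, C ((mk p k : R) * v^k) * X^k)))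
        + C (p:R)^2 * ((∑ k ∈ Ico 1 p, C ((mk p k : R) * 2^(p-k)) * X^k) * ((∑ k ∈ Ico 1 p, C ((mk p k : R) * u^k) * X^k) * (1 + C (v^p)*X^p))
            + (∑ k ∈ Ico 1 p, C ((mk p k : R) * 2^(p-k)) * X^k) * ((1 + C (u^p)*X^p) * (∑ k ∈ Ico 1 p, C ((mk p k : R) * v^k) * X^k))
            + (X^p + C ((2:R)^p)) * ((∑ k ∈ Ico 1 p, C ((mk p k : R) * u^k) * X^k) * (∑ k ∈ Ico 1 p, C ((mk p k : R) * v^k) * X^k))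
            + C (p:R) * ((∑ k ∈ Ico 1 p, C ((mk p k : R) * 2^(p-k)) * X^k) * ((∑ k ∈ Ico 1 p, C ((mk p k : R) * u^k) * X^k) * (∑ k ∈ Ico 1 p, C ((mk p k : R) * v^k) * X^k)))) := by
    ring
  rw [hprod, mul_neg, Polynomial.coeff_neg, coeff_split] at h0
  rw [coeff_main hpn, coeff_cross hpn ((2:R)^p) (u^p) (v^p)
    (fun k => (mk p k : R) * 2^(p-k)) (fun k => (mk p k : R) * u^k) (fun k => (mk p k : R) * v^k)] at h0
  rw [mk_top1 hp hpn, mk_top2 hp hpn, show p - (2*n+2) = 1 by omega, show p - (2*n+1) = 2 by omega] at h0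
  push_cast at h0
  exact ⟨-(((1+X)^2 * ((∑ k ∈ Ico 1 p, C ((mk p k : R) * 2^(p-k)) * X^k) * ((∑ k ∈ Ico 1 p, C ((mk p k : R) * u^k) * X^k) * (1 + C (v^p)*X^p))
            + (∑ k ∈ Ico 1 p, C ((mk p k : R) * 2^(p-k)) * X^k) * ((1 + C (u^p)*X^p) * (∑ k ∈ Ico 1 p, C ((mk p k : R) * v^k) * X^k))
            + (X^p + C ((2:R)^p)) * ((∑ k ∈ Ico 1 p, C ((mk p k : R) * u^k) * X^k) * (∑ k ∈ Ico 1 p, C ((mk p k : R) * v^k) * X^k))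
            + C (p:R) * ((∑ k ∈ Ico 1 p, C ((mk p k : R) * 2^(p-k)) * X^k) * ((∑ k ∈ Ico 1 p, C ((mk p k : R) * u^k) * X^k) * (∑ k ∈ Ico 1 p, C ((mk p k : R) * v^k) * X^k))))).coeff p), by linear_combination h0⟩

lemma binom_mod {p n : ℕ} (hp : p.Prime) (hpn : p = 2*n+3) :
    ∃ E : ℤ, (((3*p+2).choose p : ℕ) : ℤ) = 3 + (p:ℤ) * (6 + 3*((n:ℤ)+1)) + (p:ℤ)^2 * E := by
  have h0 : (((3*p+2).choose p : ℕ) : ℤ) = ((1+X : ℤ[X])^(3*p+2)).coeff p := by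
    rw [Polynomial.coeff_one_add_X_pow]
  have hsplit : ((1+X : ℤ[X]))^(3*p+2) = (1+X)^2 * ((1 + C (1:ℤ) * X)^p)^3 := by
    rw [Polynomial.C_1, one_mul, ← pow_mul, ← pow_add, show 2 + p*3 = 3*p+2 by omega]
  rw [hsplit, expandOne hp (1:ℤ)] at h0
  have hcube : ((1 + C ((1:ℤ)^p) * X^p + C (p:ℤ) * (∑ k ∈ Ico 1 p, C ((mk p k : ℤ) * 1^k) * X^k))^3 : ℤ[X])
      = ((1 + C ((1:ℤ)^p) * X^p)^3)
        + C (p:ℤ) * (3 * (1 + C ((1:ℤ)^p) * X^p)^2 * (∑ k ∈ Ico 1 p, C ((mk p k : ℤ) * 1^k) * X^k))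
        + C (p:ℤ)^2 * (3 * (1 + C ((1:ℤ)^p) * X^p) * (∑ k ∈ Ico 1 p, C ((mk p k : ℤ) * 1^k) * X^k)^2
            + C (p:ℤ) * (∑ k ∈ Ico 1 p, C ((mk p k : ℤ) * 1^k) * X^k)^3) := by
    ring
  rw [hcube, coeff_split] at h0
  -- coeff of (1+X)^2 * (1 + C 1 * X^p)^3
  have hm : (((1+X)^2 * ((1 + C ((1:ℤ)^p) * X^p)^3)).coeff p : ℤ) = 3 := by
    have hexp : ((1+X)^2 * ((1 + C ((1:ℤ)^p) * X^p)^3) : ℤ[X])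
        = (1+X)^2 + C (3*(1:ℤ)^p) * (((1+X)^2) * X^p)
          + C (3*((1:ℤ)^p)^2) * (((1+X)^2) * X^(2*p)) + C (((1:ℤ)^p)^3) * (((1+X)^2) * X^(3*p)) := by
      simp only [Polynomial.C_mul, Polynomial.C_pow, map_ofNat]
      generalize (1+X : ℤ[X]) = Y
      ring
    rw [hexp]
    simp only [Polynomial.coeff_add, Polynomial.coeff_C_mul]
    rw [coeff_quad_pow hpn, Polynomial.coeff_mul_X_pow', if_pos le_rfl, Nat.sub_self,
      coeff_shift_2p (by omega), coeff_shift_3p (by omega)]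
    simp [Polynomial.coeff_one_add_X_pow]
  -- coeff of (1+X)^2 * (3 * y^2 * S)
  have hc : (((1+X)^2 * (3 * (1 + C ((1:ℤ)^p) * X^p)^2 * (∑ k ∈ Ico 1 p, C ((mk p k : ℤ) * 1^k) * X^k))).coeff p : ℤ)
      = 3*(2 + ((n:ℤ)+1)) := by
    have hexp : ((1+X)^2 * (3 * (1 + C ((1:ℤ)^p) * X^p)^2 * (∑ k ∈ Ico 1 p, C ((mk p k : ℤ) * 1^k) * X^k)) : ℤ[X])
        = 3 * ((1+X)^2 * (∑ k ∈ Ico 1 p, C ((mk p k : ℤ) * 1^k) * X^k))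
          + C (6*(1:ℤ)^p) * (((1+X)^2 * (∑ k ∈ Ico 1 p, C ((mk p k : ℤ) * 1^k) * X^k)) * X^p)
          + C (3*((1:ℤ)^p)^2) * (((1+X)^2 * (∑ k ∈ Ico 1 p, C ((mk p k : ℤ) * 1^k) * X^k)) * X^(2*p)) := by
      simp only [Polynomial.C_mul, Polynomial.C_pow, map_ofNat]
      generalize (1+X : ℤ[X]) = Y
      generalize (∑ k ∈ Ico 1 p, C ((mk p k : ℤ) * 1^k) * X^k : ℤ[X]) = S
      ring
    rw [hexp]
    simp only [Polynomial.coeff_add, Polynomial.coeff_C_mul, Polynomial.coeff_ofNat_mul]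
    rw [coeff_shift_p _ _ (coeff_zero_sum p _), coeff_shift_2p (by omega),
      coeff_quad_sum hpn (fun k => (mk p k : ℤ) * 1^k)]
    simp only [one_pow, mul_one]
    rw [mk_top1 hp hpn, mk_top2 hp hpn]
    push_cast
    ring
  rw [hm, hc] at h0
  exact ⟨((1+X)^2 * (3 * (1 + C ((1:ℤ)^p) * X^p) * (∑ k ∈ Ico 1 p, C ((mk p k : ℤ) * 1^k) * X^k)^2
    + C (p:ℤ) * (∑ k ∈ Ico 1 p, C ((mk p k : ℤ) * 1^k) * X^k)^3)).coeff p, by linear_combination h0⟩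

lemma M_val {p n : ℕ} (hp : p.Prime) (hpn : p = 2*n+3) :
    ∃ K : ℤ, M p = (if Even (n+1) then 0 else 6) + (p:ℤ)*K := by
  subst hpn
  obtain ⟨E, hE⟩ := T_mod hp rfl
  obtain ⟨E2, hb⟩ := binom_mod hp rfl
  have hM : ((2*n+3:ℕ):ℤ) * M (2*n+3) = T (2*n+3) - 1
      + 8*((2:ℤ)^n)^2*(((3*(2*n+3)+2).choose (2*n+3) : ℕ) : ℤ) := by
    have h0 := pM_eq hp
    have hneg : ((-2:ℤ))^(2*n+3) = -(8*((2:ℤ)^n)^2) := by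
      rw [Odd.neg_pow ⟨n+1, by omega⟩]; ring
    rw [hneg] at h0
    linear_combination h0
  have hprime : Prime ((2*n+3:ℕ):ℤ) := Nat.prime_iff_prime_int.mp hp
  have hpne : ((2*n+3:ℕ):ℤ) ≠ 0 := by push_cast; omega
  have h4 : (n+1) % 4 = 0 ∨ (n+1) % 4 = 1 ∨ (n+1) % 4 = 2 ∨ (n+1) % 4 = 3 := by omega
  rcases h4 with h4 | h4 | h4 | h4
  · -- case 0
    have hn4 : n % 4 = 3 := by omega
    have w1 : u^(2*n+3) + v^(2*n+3) = 2^(n+1) * (2) := by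
      rw [hS1 rfl, h4, show u * a^(0:ℕ) + v * b^(0:ℕ) = (2) by decide]
    have w2 : u^(2*n+2) + v^(2*n+2) = 2^(n+1) * (2) := by
      rw [hS2 rfl, h4, show a^(0:ℕ) + b^(0:ℕ) = (2) by decide]
    have w3 : u^(2*n+1) + v^(2*n+1) = 2^n * (2) := by
      rw [hS3 n, hn4, show u * a^(3:ℕ) + v * b^(3:ℕ) = (2) by decide]
    have hTR : ((T (2*n+3) - (- 25 - 272*((2:ℤ)^n)^3 - 28*(n:ℤ) - 208*(n:ℤ)*((2:ℤ)^n)^3 - 8*(n:ℤ)^2 - 32*(n:ℤ)^2*((2:ℤ)^n)^3) : ℤ) : R) = ((((2*n+3:ℕ)^2 : ℤ)) : R) * E := by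
      push_cast
      push_cast at hE
      linear_combination hE - (2:R)^(2*n+3)*w1 - ((2*(n:R)+3)*(2:R)^(2*n+3)*2)*w2
        - ((2*(n:R)+3)*(2:R)^(2*n+3)*((n:R)+1))*w3
    obtain ⟨E1, hT⟩ := (Zsqrtd.intCast_dvd_intCast _ _).mp ⟨E, hTR⟩
    have hfr := freshman (p := 2*n+3) hp
    rw [w1] at hfr
    have hfr2 : (((2*n+3:ℕ):ℤ) : R) ∣ (((2:ℤ)^(2*n+3) - 2^(n+1)*(2) : ℤ) : R) := by
      push_cast
      exact_mod_cast hfr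
    have hdvd2 := (Zsqrtd.intCast_dvd_intCast _ _).mp hfr2
    rw [show (2:ℤ)^(2*n+3) - 2^(n+1)*(2) = 2^(n+2)*(2^(n+1) - 1) by ring] at hdvd2
    have hsd : ((2*n+3:ℕ):ℤ) ∣ ((2:ℤ)^(n+1) - 1) := by
      rcases (hprime.dvd_mul).mp hdvd2 with hcon | h
      · exfalso
        have h2 : ((2*n+3:ℕ):ℤ) ∣ 2 := hprime.dvd_of_dvd_pow hcon
        have := Int.le_of_dvd (by norm_num) h2
        push_cast at this; omega
      · exact h
    obtain ⟨s, hs0⟩ := hsd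
    have hs : 2*(2:ℤ)^n = 1 + ((2*n+3:ℕ):ℤ)*s := by linear_combination hs0
    refine ⟨(2*E2 + E1 + 6*s + 12*s*E2 - 42*s^2 + 18*s^2*E2 - 102*s^3 + 6*(n:ℤ)*s + 8*(n:ℤ)*s*E2 - 24*(n:ℤ)*s^2 + 24*(n:ℤ)*s^2*E2 - 146*(n:ℤ)*s^3 + 8*(n:ℤ)^2*s^2*E2 - 64*(n:ℤ)^2*s^3 - 8*(n:ℤ)^3*s^3), ?_⟩
    rw [if_pos (by rw [Nat.even_iff]; omega)]
    apply mul_left_cancel₀ hpne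
    push_cast at hT hs hM hb ⊢
    linear_combination hM + hT + 8*((2:ℤ)^n)^2*hb
      + (26 + 18*E2 + 52*((2:ℤ)^n) + 36*((2:ℤ)^n)*E2 - 136*((2:ℤ)^n)^2 - 24*s + 54*s*E2 - 204*s*((2:ℤ)^n) - 306*s^2 + 28*(n:ℤ) + 24*(n:ℤ)*E2 + 56*(n:ℤ)*((2:ℤ)^n) + 48*(n:ℤ)*((2:ℤ)^n)*E2 - 104*(n:ℤ)*((2:ℤ)^n)^2 - 10*(n:ℤ)*s + 108*(n:ℤ)*s*E2 - 292*(n:ℤ)*s*((2:ℤ)^n) - 642*(n:ℤ)*s^2 + 8*(n:ℤ)^2 + 8*(n:ℤ)^2*E2 + 16*(n:ℤ)^2*((2:ℤ)^n) + 16*(n:ℤ)^2*((2:ℤ)^n)*E2 - 16*(n:ℤ)^2*((2:ℤ)^n)^2 + 16*(n:ℤ)^2*s + 72*(n:ℤ)^2*s*E2 - 128*(n:ℤ)^2*s*((2:ℤ)^n) - 484*(n:ℤ)^2*s^2 + 8*(n:ℤ)^3*s + 16*(n:ℤ)^3*s*E2 - 16*(n:ℤ)^3*s*((2:ℤ)^n)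 - 152*(n:ℤ)^3*s^2 - 16*(n:ℤ)^4*s^2)*hs

  · -- case 1
    have hn4 : n % 4 = 0 := by omega
    have w1 : u^(2*n+3) + v^(2*n+3) = 2^(n+1) * (-2) := by
      rw [hS1 rfl, h4, show u * a^(1:ℕ) + v * b^(1:ℕ) = (-2) by decide]
    have w2 : u^(2*n+2) + v^(2*n+2) = 2^(n+1) * (0) := by
      rw [hS2 rfl, h4, show a^(1:ℕ) + b^(1:ℕ) = (0) by decide]
    have w3 : u^(2*n+1) + v^(2*n+1) = 2^n * (2) := by
      rw [hS3 n, hn4, show u * a^(0:ℕ) + v * b^(0:ℕ) = (2) by decide]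
    have hTR : ((T (2*n+3) - (- 25 - 16*((2:ℤ)^n)^3 - 28*(n:ℤ) - 80*(n:ℤ)*((2:ℤ)^n)^3 - 8*(n:ℤ)^2 - 32*(n:ℤ)^2*((2:ℤ)^n)^3) : ℤ) : R) = ((((2*n+3:ℕ)^2 : ℤ)) : R) * E := by
      push_cast
      push_cast at hE
      linear_combination hE - (2:R)^(2*n+3)*w1 - ((2*(n:R)+3)*(2:R)^(2*n+3)*2)*w2
        - ((2*(n:R)+3)*(2:R)^(2*n+3)*((n:R)+1))*w3
    obtain ⟨E1, hT⟩ := (Zsqrtd.intCast_dvd_intCast _ _).mp ⟨E, hTR⟩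
    have hfr := freshman (p := 2*n+3) hp
    rw [w1] at hfr
    have hfr2 : (((2*n+3:ℕ):ℤ) : R) ∣ (((2:ℤ)^(2*n+3) - 2^(n+1)*(-2) : ℤ) : R) := by
      push_cast
      exact_mod_cast hfr
    have hdvd2 := (Zsqrtd.intCast_dvd_intCast _ _).mp hfr2
    rw [show (2:ℤ)^(2*n+3) - 2^(n+1)*(-2) = 2^(n+2)*(2^(n+1) - (-1)) by ring] at hdvd2
    have hsd : ((2*n+3:ℕ):ℤ) ∣ ((2:ℤ)^(n+1) - (-1)) := by
      rcases (hprime.dvd_mul).mp hdvd2 with hcon | h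
      · exfalso
        have h2 : ((2*n+3:ℕ):ℤ) ∣ 2 := hprime.dvd_of_dvd_pow hcon
        have := Int.le_of_dvd (by norm_num) h2
        push_cast at this; omega
      · exact h
    obtain ⟨s, hs0⟩ := hsd
    have hs : 2*(2:ℤ)^n = (-1) + ((2*n+3:ℕ):ℤ)*s := by linear_combination hs0
    refine ⟨(2 + 2*E2 + E1 - 42*s - 12*s*E2 + 66*s^2 + 18*s^2*E2 - 6*s^3 - 18*(n:ℤ)*s - 8*(n:ℤ)*s*E2 + 84*(n:ℤ)*s^2 + 24*(n:ℤ)*s^2*E2 - 34*(n:ℤ)*s^3 + 24*(n:ℤ)^2*s^2 + 8*(n:ℤ)^2*s^2*E2 - 32*(n:ℤ)^2*s^3 - 8*(n:ℤ)^3*s^3), ?_⟩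
    rw [if_neg (by rw [← Nat.not_odd_iff_even]; push_neg; rw [Nat.odd_iff]; omega)]
    apply mul_left_cancel₀ hpne
    push_cast at hT hs hM hb ⊢
    linear_combination hM + hT + 8*((2:ℤ)^n)^2*hb
      + (- 62 - 18*E2 + 124*((2:ℤ)^n) + 36*((2:ℤ)^n)*E2 - 8*((2:ℤ)^n)^2 + 192*s + 54*s*E2 - 12*s*((2:ℤ)^n) - 18*s^2 - 64*(n:ℤ) - 24*(n:ℤ)*E2 + 128*(n:ℤ)*((2:ℤ)^n) + 48*(n:ℤ)*((2:ℤ)^n)*E2 - 40*(n:ℤ)*((2:ℤ)^n)^2 + 350*(n:ℤ)*s + 108*(n:ℤ)*s*E2 - 68*(n:ℤ)*s*((2:ℤ)^n) - 114*(n:ℤ)*s^2 - 16*(n:ℤ)^2 - 8*(n:ℤ)^2*E2 + 32*(n:ℤ)^2*((2:ℤ)^n) + 16*(n:ℤ)^2*((2:ℤ)^n)*E2 - 16*(n:ℤ)^2*((2:ℤ)^n)^2 + 208*(n:ℤ)^2*s + 72*(n:ℤ)^2*s*E2 - 64*(n:ℤ)^2*s*((2:ℤ)^n) - 164*(n:ℤ)^2*s^2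 + 40*(n:ℤ)^3*s + 16*(n:ℤ)^3*s*E2 - 16*(n:ℤ)^3*s*((2:ℤ)^n) - 88*(n:ℤ)^3*s^2 - 16*(n:ℤ)^4*s^2)*hs

  · -- case 2
    have hn4 : n % 4 = 1 := by omega
    have w1 : u^(2*n+3) + v^(2*n+3) = 2^(n+1) * (-2) := by
      rw [hS1 rfl, h4, show u * a^(2:ℕ) + v * b^(2:ℕ) = (-2) by decide]
    have w2 : u^(2*n+2) + v^(2*n+2) = 2^(n+1) * (-2) := by
      rw [hS2 rfl, h4, show a^(2:ℕ) + b^(2:ℕ) = (-2) by decide]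
    have w3 : u^(2*n+1) + v^(2*n+1) = 2^n * (-2) := by
      rw [hS3 n, hn4, show u * a^(1:ℕ) + v * b^(1:ℕ) = (-2) by decide]
    have hTR : ((T (2*n+3) - (- 25 + 272*((2:ℤ)^n)^3 - 28*(n:ℤ) + 208*(n:ℤ)*((2:ℤ)^n)^3 - 8*(n:ℤ)^2 + 32*(n:ℤ)^2*((2:ℤ)^n)^3) : ℤ) : R) = ((((2*n+3:ℕ)^2 : ℤ)) : R) * E := by
      push_cast
      push_cast at hE
      linear_combination hE - (2:R)^(2*n+3)*w1 - ((2*(n:R)+3)*(2:R)^(2*n+3)*2)*w2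
        - ((2*(n:R)+3)*(2:R)^(2*n+3)*((n:R)+1))*w3
    obtain ⟨E1, hT⟩ := (Zsqrtd.intCast_dvd_intCast _ _).mp ⟨E, hTR⟩
    have hfr := freshman (p := 2*n+3) hp
    rw [w1] at hfr
    have hfr2 : (((2*n+3:ℕ):ℤ) : R) ∣ (((2:ℤ)^(2*n+3) - 2^(n+1)*(-2) : ℤ) : R) := by
      push_cast
      exact_mod_cast hfr
    have hdvd2 := (Zsqrtd.intCast_dvd_intCast _ _).mp hfr2
    rw [show (2:ℤ)^(2*n+3) - 2^(n+1)*(-2) = 2^(n+2)*(2^(n+1) - (-1)) by ring] at hdvd2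
    have hsd : ((2*n+3:ℕ):ℤ) ∣ ((2:ℤ)^(n+1) - (-1)) := by
      rcases (hprime.dvd_mul).mp hdvd2 with hcon | h
      · exfalso
        have h2 : ((2*n+3:ℕ):ℤ) ∣ 2 := hprime.dvd_of_dvd_pow hcon
        have := Int.le_of_dvd (by norm_num) h2
        push_cast at this; omega
      · exact h
    obtain ⟨s, hs0⟩ := hsd
    have hs : 2*(2:ℤ)^n = (-1) + ((2*n+3:ℕ):ℤ)*s := by linear_combination hs0
    refine ⟨(2*E2 + E1 - 6*s - 12*s*E2 - 42*s^2 + 18*s^2*E2 + 102*s^3 - 6*(n:ℤ)*s - 8*(n:ℤ)*s*E2 - 24*(n:ℤ)*s^2 + 24*(n:ℤ)*s^2*E2 + 146*(n:ℤ)*s^3 + 8*(n:ℤ)^2*s^2*E2 + 64*(n:ℤ)^2*s^3 + 8*(n:ℤ)^3*s^3), ?_⟩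
    rw [if_pos (by rw [Nat.even_iff]; omega)]
    apply mul_left_cancel₀ hpne
    push_cast at hT hs hM hb ⊢
    linear_combination hM + hT + 8*((2:ℤ)^n)^2*hb
      + (- 26 - 18*E2 + 52*((2:ℤ)^n) + 36*((2:ℤ)^n)*E2 + 136*((2:ℤ)^n)^2 - 24*s + 54*s*E2 + 204*s*((2:ℤ)^n) + 306*s^2 - 28*(n:ℤ) - 24*(n:ℤ)*E2 + 56*(n:ℤ)*((2:ℤ)^n) + 48*(n:ℤ)*((2:ℤ)^n)*E2 + 104*(n:ℤ)*((2:ℤ)^n)^2 - 10*(n:ℤ)*s + 108*(n:ℤ)*s*E2 + 292*(n:ℤ)*s*((2:ℤ)^n) + 642*(n:ℤ)*s^2 - 8*(n:ℤ)^2 - 8*(n:ℤ)^2*E2 + 16*(n:ℤ)^2*((2:ℤ)^n) + 16*(n:ℤ)^2*((2:ℤ)^n)*E2 + 16*(n:ℤ)^2*((2:ℤ)^n)^2 + 16*(n:ℤ)^2*s + 72*(n:ℤ)^2*s*E2 + 128*(n:ℤ)^2*s*((2:ℤ)^n) + 484*(n:ℤ)^2*s^2 + 8*(n:ℤ)^3*s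 + 16*(n:ℤ)^3*s*E2 + 16*(n:ℤ)^3*s*((2:ℤ)^n) + 152*(n:ℤ)^3*s^2 + 16*(n:ℤ)^4*s^2)*hs

  · -- case 3
    have hn4 : n % 4 = 2 := by omega
    have w1 : u^(2*n+3) + v^(2*n+3) = 2^(n+1) * (2) := by
      rw [hS1 rfl, h4, show u * a^(3:ℕ) + v * b^(3:ℕ) = (2) by decide]
    have w2 : u^(2*n+2) + v^(2*n+2) = 2^(n+1) * (0) := by
      rw [hS2 rfl, h4, show a^(3:ℕ) + b^(3:ℕ) = (0) by decide]
    have w3 : u^(2*n+1) + v^(2*n+1) = 2^n * (-2) := by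
      rw [hS3 n, hn4, show u * a^(2:ℕ) + v * b^(2:ℕ) = (-2) by decide]
    have hTR : ((T (2*n+3) - (- 25 + 16*((2:ℤ)^n)^3 - 28*(n:ℤ) + 80*(n:ℤ)*((2:ℤ)^n)^3 - 8*(n:ℤ)^2 + 32*(n:ℤ)^2*((2:ℤ)^n)^3) : ℤ) : R) = ((((2*n+3:ℕ)^2 : ℤ)) : R) * E := by
      push_cast
      push_cast at hE
      linear_combination hE - (2:R)^(2*n+3)*w1 - ((2*(n:R)+3)*(2:R)^(2*n+3)*2)*w2
        - ((2*(n:R)+3)*(2:R)^(2*n+3)*((n:R)+1))*w3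
    obtain ⟨E1, hT⟩ := (Zsqrtd.intCast_dvd_intCast _ _).mp ⟨E, hTR⟩
    have hfr := freshman (p := 2*n+3) hp
    rw [w1] at hfr
    have hfr2 : (((2*n+3:ℕ):ℤ) : R) ∣ (((2:ℤ)^(2*n+3) - 2^(n+1)*(2) : ℤ) : R) := by
      push_cast
      exact_mod_cast hfr
    have hdvd2 := (Zsqrtd.intCast_dvd_intCast _ _).mp hfr2
    rw [show (2:ℤ)^(2*n+3) - 2^(n+1)*(2) = 2^(n+2)*(2^(n+1) - 1) by ring] at hdvd2
    have hsd : ((2*n+3:ℕ):ℤ) ∣ ((2:ℤ)^(n+1) - 1) := by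
      rcases (hprime.dvd_mul).mp hdvd2 with hcon | h
      · exfalso
        have h2 : ((2*n+3:ℕ):ℤ) ∣ 2 := hprime.dvd_of_dvd_pow hcon
        have := Int.le_of_dvd (by norm_num) h2
        push_cast at this; omega
      · exact h
    obtain ⟨s, hs0⟩ := hsd
    have hs : 2*(2:ℤ)^n = 1 + ((2*n+3:ℕ):ℤ)*s := by linear_combination hs0
    refine ⟨(2 + 2*E2 + E1 + 42*s + 12*s*E2 + 66*s^2 + 18*s^2*E2 + 6*s^3 + 18*(n:ℤ)*s + 8*(n:ℤ)*s*E2 + 84*(n:ℤ)*s^2 + 24*(n:ℤ)*s^2*E2 + 34*(n:ℤ)*s^3 + 24*(n:ℤ)^2*s^2 + 8*(n:ℤ)^2*s^2*E2 + 32*(n:ℤ)^2*s^3 + 8*(n:ℤ)^3*s^3), ?_⟩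
    rw [if_neg (by rw [← Nat.not_odd_iff_even]; push_neg; rw [Nat.odd_iff]; omega)]
    apply mul_left_cancel₀ hpne
    push_cast at hT hs hM hb ⊢
    linear_combination hM + hT + 8*((2:ℤ)^n)^2*hb
      + (62 + 18*E2 + 124*((2:ℤ)^n) + 36*((2:ℤ)^n)*E2 + 8*((2:ℤ)^n)^2 + 192*s + 54*s*E2 + 12*s*((2:ℤ)^n) + 18*s^2 + 64*(n:ℤ) + 24*(n:ℤ)*E2 + 128*(n:ℤ)*((2:ℤ)^n) + 48*(n:ℤ)*((2:ℤ)^n)*E2 + 40*(n:ℤ)*((2:ℤ)^n)^2 + 350*(n:ℤ)*s + 108*(n:ℤ)*s*E2 + 68*(n:ℤ)*s*((2:ℤ)^n) + 114*(n:ℤ)*s^2 + 16*(n:ℤ)^2 + 8*(n:ℤ)^2*E2 + 32*(n:ℤ)^2*((2:ℤ)^n) + 16*(n:ℤ)^2*((2:ℤ)^n)*E2 + 16*(n:ℤ)^2*((2:ℤ)^n)^2 + 208*(n:ℤ)^2*s + 72*(n:ℤ)^2*s*E2 + 64*(n:ℤ)^2*s*((2:ℤ)^n) + 164*(n:ℤ)^2*s^2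 + 40*(n:ℤ)^3*s + 16*(n:ℤ)^3*s*E2 + 16*(n:ℤ)^3*s*((2:ℤ)^n) + 88*(n:ℤ)^3*s^2 + 16*(n:ℤ)^4*s^2)*hs

end Stmt7Aux

theorem stmt_7 (p : ℕ) (hp : p.Prime) (hodd : Odd p) :
    (∑ k ∈ Finset.Icc 1 (p - 1),
        (2 : ZMod p) ^ k * ((3 * k + 2).choose k : ZMod p) * (k : ZMod p)⁻¹) =
      3 * ((-1) ^ ((p - 1) / 2) - 1) := by
  obtain ⟨m, hm⟩ := hodd
  have hp2 := hp.two_le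
  obtain ⟨n, hpn⟩ : ∃ n, p = 2*n+3 := ⟨m-1, by omega⟩
  haveI := Fact.mk hp
  rw [Stmt7Aux.sum_eq_negM hp ⟨m, hm⟩]
  obtain ⟨K, hK⟩ := Stmt7Aux.M_val hp hpn
  have hhalf : (p-1)/2 = n+1 := by omega
  rw [hhalf]
  rcases Nat.even_or_odd (n+1) with he | ho
  · rw [if_pos he] at hK
    rw [hK, Even.neg_one_pow he]
    push_cast
    rw [show ((p:ℕ):ZMod p) = 0 from ZMod.natCast_self p]
    ring
  · rw [if_neg (by rw [← Nat.not_odd_iff_even]; push_neg; exact ho)] at hK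
    rw [hK, Odd.neg_one_pow ho]
    push_cast
    rw [show ((p:ℕ):ZMod p) = 0 from ZMod.natCast_self p]
    ring
end

section
/- For all m, n ∈ ℕ, the following identity holds in ℤ: 2^n · ∑_{k=0}^{⌊m/3⌋} (-2)^k · binom(n, m−3k) · binom(3k−m+n, k) = (-1)^m · ∑_{j=0}^{n} binom(n, j) · ∑_{k=0}^{m} (-2)^k · binom(n, m−k) · binom(2j, k). -/
open Polynomial Finset Nat

-- subset-of-subset choose identity
lemma choose_swap (n k s : ℕ) (hk : k ≤ n) (hs : s ≤ n) :
    n.choose k * (n - k).choose s = n.choose s * (n - s).choose k := by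
  by_cases h : k + s ≤ n
  · have key : ∀ a b : ℕ, a + b ≤ n →
        n.choose a * ((n - a).choose b) * (a ! * b ! * (n - a - b)!) = n ! := by
      intro a b hab
      have h1 : b ≤ n - a := by omega
      have h2 : a ≤ n := by omega
      calc n.choose a * ((n - a).choose b) * (a ! * b ! * (n - a - b)!)
          = n.choose a * a ! * (((n - a).choose b * b ! * ((n - a) - b)!)) := by
            have hx : n - a - b = (n - a) - b := by omega
            rw [hx]; ring
        _ = n.choose a * a ! * (n - a)! := by rw [Nat.choose_mul_factorial_mul_factorial h1]
        _ = n ! := Nat.choose_mul_factorial_mul_factorial h2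
    have e1 := key k s h
    have e2 := key s k (by omega)
    have hsub : n - s - k = n - k - s := by omega
    rw [hsub] at e2
    have hpos : 0 < k ! * s ! * (n - k - s)! := by positivity
    refine Nat.eq_of_mul_eq_mul_right hpos ?_
    calc n.choose k * (n - k).choose s * (k ! * s ! * (n - k - s)!) = n ! := e1
      _ = n.choose s * (n - s).choose k * (s ! * k ! * (n - k - s)!) := e2.symm
      _ = n.choose s * (n - s).choose k * (k ! * s ! * (n - k - s)!) := by ring
  · have z1 : (n - k).choose s = 0 := Nat.choose_eq_zero_of_lt (by omega)
    have z2 : (n - s).choose k = 0 := Nat.choose_eq_zero_of_lt (by omega)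
    rw [z1, z2, mul_zero, mul_zero]

lemma coeff_one_add_CX_pow (a : ℤ) (j i : ℕ) :
    ((1 + C a * X) ^ j).coeff i = a ^ i * (j.choose i : ℤ) := by
  rw [add_comm, add_pow, finset_sum_coeff]
  have h : ∀ k ∈ range (j + 1),
      ((C a * X) ^ k * (1 : ℤ[X]) ^ (j - k) * ((j.choose k : ℕ) : ℤ[X])).coeff i
        = if i = k then a ^ k * (j.choose k : ℤ) else 0 := by
    intro k _
    have e : (C a * X) ^ k * (1 : ℤ[X]) ^ (j - k) * ((j.choose k : ℕ) : ℤ[X])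
        = C (a ^ k * (j.choose k : ℤ)) * X ^ k := by
      rw [one_pow, mul_one, mul_pow, ← C_pow, ← Polynomial.C_eq_natCast, C_mul]; ring
    rw [e, coeff_C_mul, coeff_X_pow]
    split_ifs <;> simp
  rw [Finset.sum_congr rfl h, Finset.sum_ite_eq]
  by_cases hi : i ∈ range (j + 1)
  · rw [if_pos hi]
  · rw [if_neg hi]
    have : j.choose i = 0 := Nat.choose_eq_zero_of_lt (by simpa using hi)
    simp [this]

-- Lemma A: the LHS sum equals (-1)^m * coeff m of (1 - X + 2X^3)^n
lemma lemA (m n : ℕ) :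
    ∑ k ∈ Finset.range (m / 3 + 1),
        (-2 : ℤ) ^ k * (n.choose (m - 3 * k) : ℤ) * ((n + 3 * k - m).choose k : ℤ)
      = (-1) ^ m * (((1 : ℤ[X]) - X + 2 * X ^ 3) ^ n).coeff m := by
  have hP : ((1 : ℤ[X]) - X + 2 * X ^ 3) = 2 * X ^ 3 + (1 + C (-1) * X) := by
    simp only [map_neg, map_one]; ring
  rw [hP, add_pow, finset_sum_coeff]
  have hterm : ∀ k ∈ range (n + 1),
      (((2 : ℤ[X]) * X ^ 3) ^ k * (1 + C (-1) * X) ^ (n - k) * ((n.choose k : ℕ) : ℤ[X])).coeff m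
        = if 3 * k ≤ m then
            (2 : ℤ) ^ k * (n.choose k : ℤ) * ((-1) ^ (m - 3 * k) * ((n - k).choose (m - 3 * k) : ℤ))
          else 0 := by
    intro k _
    have e : ((2 : ℤ[X]) * X ^ 3) ^ k * (1 + C (-1) * X) ^ (n - k) * ((n.choose k : ℕ) : ℤ[X])
        = C ((2 : ℤ) ^ k * (n.choose k : ℤ)) * ((1 + C (-1) * X) ^ (n - k) * X ^ (3 * k)) := by
      have h2 : ((2 : ℤ[X])) = C (2 : ℤ) := by norm_num
      rw [h2, mul_pow, ← C_pow, ← pow_mul, ← Polynomial.C_eq_natCast, C_mul]; ring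
    rw [e, coeff_C_mul, coeff_mul_X_pow']
    split_ifs with h
    · rw [coeff_one_add_CX_pow]
    · simp
  rw [Finset.sum_congr rfl hterm]
  -- now a pure sum identity
  set M := max n (m / 3) with hM
  have step1 : (∑ k ∈ range (n + 1), if 3 * k ≤ m then
        (2 : ℤ) ^ k * (n.choose k : ℤ) * ((-1) ^ (m - 3 * k) * ((n - k).choose (m - 3 * k) : ℤ))
      else 0)
      = ∑ k ∈ range (M + 1), (if 3 * k ≤ m then
        (2 : ℤ) ^ k * (n.choose k : ℤ) * ((-1) ^ (m - 3 * k) * ((n - k).choose (m - 3 * k) : ℤ))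
      else 0) := by
    refine Finset.sum_subset (Finset.range_subset_range.mpr (by omega)) ?_
    intro k _ hk
    have hkn : n < k := by simp only [Finset.mem_range] at hk; omega
    simp [Nat.choose_eq_zero_of_lt hkn]
  have step2 : (∑ k ∈ range (M + 1), if 3 * k ≤ m then
        (2 : ℤ) ^ k * (n.choose k : ℤ) * ((-1) ^ (m - 3 * k) * ((n - k).choose (m - 3 * k) : ℤ))
      else 0)
      = ∑ k ∈ range (m / 3 + 1), (if 3 * k ≤ m then
        (2 : ℤ) ^ k * (n.choose k : ℤ) * ((-1) ^ (m - 3 * k) * ((n - k).choose (m - 3 * k) : ℤ))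
      else 0) := by
    refine (Finset.sum_subset (Finset.range_subset_range.mpr (by omega)) ?_).symm
    intro k _ hk
    have : ¬ (3 * k ≤ m) := by simp only [Finset.mem_range] at hk; omega
    simp [this]
  rw [step1, step2, Finset.mul_sum]
  refine Finset.sum_congr rfl ?_
  intro k hk
  have h3k : 3 * k ≤ m := by
    simp only [Finset.mem_range] at hk; omega
  rw [if_pos h3k]
  by_cases hmn : m - 3 * k ≤ n
  · by_cases hkn : k ≤ n
    · -- main case
      have hc := choose_swap n k (m - 3 * k) hkn hmn
      have hrw : n - (m - 3 * k) = n + 3 * k - m := by omega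
      rw [hrw] at hc
      have hc' : (n.choose k : ℤ) * ((n - k).choose (m - 3 * k) : ℤ)
          = (n.choose (m - 3 * k) : ℤ) * ((n + 3 * k - m).choose k : ℤ) := by
        exact_mod_cast congrArg (Nat.cast : ℕ → ℤ) hc
      have hsg : ((-1 : ℤ)) ^ (m - 3 * k) = (-1) ^ m * (-1) ^ k := by
        have : ((-1 : ℤ)) ^ (m - 3 * k) * (-1) ^ (3 * k) = (-1) ^ m := by
          rw [← pow_add]; congr 1; omega
        have h3 : ((-1 : ℤ)) ^ (3 * k) = (-1) ^ k := by
          rw [pow_mul]; norm_num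
        rw [h3] at this
        have hkk : ((-1 : ℤ)) ^ k * (-1) ^ k = 1 := by
          rw [← pow_add, ← two_mul, pow_mul]; norm_num
        linear_combination ((-1 : ℤ)) ^ k * this - ((-1 : ℤ)) ^ (m - 3 * k) * hkk
      have hneg : ((-2 : ℤ)) ^ k = (-1) ^ k * 2 ^ k := by
        rw [show (-2 : ℤ) = -1 * 2 by norm_num, mul_pow]
      have hm2 : ((-1 : ℤ)) ^ m * (-1) ^ m = 1 := by
        rw [← pow_add, ← two_mul, pow_mul]; norm_num
      rw [hsg, hneg]
      linear_combination (-((-1 : ℤ)) ^ k * 2 ^ k) * hc' -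
        (((-1 : ℤ)) ^ k * 2 ^ k * (n.choose k : ℤ) * (((n - k).choose (m - 3 * k) : ℕ) : ℤ)) * hm2
    · have h1 : (n.choose k : ℤ) = 0 := by
        exact_mod_cast congrArg (Nat.cast : ℕ → ℤ) (Nat.choose_eq_zero_of_lt (by omega))
      have h2 : ((n + 3 * k - m).choose k : ℤ) = 0 := by
        exact_mod_cast congrArg (Nat.cast : ℕ → ℤ) (Nat.choose_eq_zero_of_lt (by omega))
      rw [h1, h2]; ring
  · have h1 : ((n - k).choose (m - 3 * k) : ℤ) = 0 := by
      exact_mod_cast congrArg (Nat.cast : ℕ → ℤ) (Nat.choose_eq_zero_of_lt (by omega))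
    have h2 : (n.choose (m - 3 * k) : ℤ) = 0 := by
      exact_mod_cast congrArg (Nat.cast : ℕ → ℤ) (Nat.choose_eq_zero_of_lt (by omega))
    rw [h1, h2]; ring

-- Lemma B: the RHS double sum equals 2^n * coeff m of (1 - X + 2X^3)^n
lemma lemB (m n : ℕ) :
    ∑ j ∈ Finset.range (n + 1),
        (n.choose j : ℤ) *
          ∑ k ∈ Finset.range (m + 1),
            (-2 : ℤ) ^ k * (n.choose (m - k) : ℤ) * ((2 * j).choose k : ℤ)
      = 2 ^ n * (((1 : ℤ[X]) - X + 2 * X ^ 3) ^ n).coeff m := by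
  have hinner : ∀ j : ℕ,
      (∑ k ∈ Finset.range (m + 1),
        (-2 : ℤ) ^ k * (n.choose (m - k) : ℤ) * ((2 * j).choose k : ℤ))
      = (((1 + C (-2 : ℤ) * X) ^ (2 * j)) * (1 + X) ^ n).coeff m := by
    intro j
    rw [coeff_mul, Finset.Nat.sum_antidiagonal_eq_sum_range_succ_mk]
    refine Finset.sum_congr rfl ?_
    intro k _
    rw [coeff_one_add_CX_pow, coeff_one_add_X_pow]
    ring
  simp only [hinner]
  have hsum : ∑ j ∈ Finset.range (n + 1),
      (n.choose j : ℤ) * (((1 + C (-2 : ℤ) * X) ^ (2 * j)) * (1 + X) ^ n).coeff m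
      = (∑ j ∈ Finset.range (n + 1),
          C ((n.choose j : ℤ)) * (((1 + C (-2 : ℤ) * X) ^ (2 * j)) * (1 + X) ^ n)).coeff m := by
    rw [finset_sum_coeff]
    exact Finset.sum_congr rfl fun j _ => (coeff_C_mul _).symm
  rw [hsum]
  have hpoly : (∑ j ∈ Finset.range (n + 1),
      C ((n.choose j : ℤ)) * (((1 + C (-2 : ℤ) * X) ^ (2 * j)) * (1 + X) ^ n))
      = C ((2 : ℤ) ^ n) * (((1 : ℤ[X]) - X + 2 * X ^ 3) ^ n) := by
    have h1 : ∀ j ∈ Finset.range (n + 1),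
        C ((n.choose j : ℤ)) * (((1 + C (-2 : ℤ) * X) ^ (2 * j)) * (1 + X) ^ n)
        = (((1 + C (-2 : ℤ) * X) ^ 2) ^ j * (1 : ℤ[X]) ^ (n - j) * ((n.choose j : ℕ) : ℤ[X]))
            * (1 + X) ^ n := by
      intro j _
      rw [pow_mul, one_pow, mul_one, ← Polynomial.C_eq_natCast]
      ring
    rw [Finset.sum_congr rfl h1, ← Finset.sum_mul, ← add_pow, ← mul_pow]
    have hb : ((1 + C (-2 : ℤ) * X) ^ 2 + 1) * (1 + X)
        = C (2 : ℤ) * ((1 : ℤ[X]) - X + 2 * X ^ 3) := by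
      have h2 : C (-2 : ℤ) = (-2 : ℤ[X]) := by
        rw [eq_intCast C (-2 : ℤ)]; norm_num
      have h3 : C (2 : ℤ) = (2 : ℤ[X]) := by
        rw [eq_intCast C (2 : ℤ)]; norm_num
      rw [h2, h3]; ring
    rw [hb, mul_pow, ← C_pow]
  rw [hpoly, coeff_C_mul]

theorem stmt_8 (m n : ℕ) :
    (2 : ℤ) ^ n *
        ∑ k ∈ Finset.range (m / 3 + 1),
          (-2 : ℤ) ^ k * (n.choose (m - 3 * k) : ℤ) * ((n + 3 * k - m).choose k : ℤ) =
      (-1) ^ m *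
        ∑ j ∈ Finset.range (n + 1),
          (n.choose j : ℤ) *
            ∑ k ∈ Finset.range (m + 1),
              (-2 : ℤ) ^ k * (n.choose (m - k) : ℤ) * ((2 * j).choose k : ℤ) := by
  rw [lemA m n, lemB m n]
  ring
end

section
/- Let p > 5 be a prime. Then 5 · ∑_{s=0}^{p-1} (-1)^s · ∑_{t=0}^{p-1} 2^t · binom(2s, t) ≡ 3·(-1)^{(p-1)/2} + 2 (mod p). -/
open Finset

private lemma aux_choose (p r t : ℕ) [Fact p.Prime] (htp : t < p) :
    (((p + r).choose t : ℕ) : ZMod p) = ((r.choose t : ℕ) : ZMod p) := by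
  rw [Nat.add_choose_eq, Nat.cast_sum]
  rw [Finset.sum_eq_single ((0 : ℕ), t)]
  · simp
  · rintro ⟨i, j⟩ hij hne
    rw [Finset.HasAntidiagonal.mem_antidiagonal] at hij
    have hi0 : i ≠ 0 := by
      rintro rfl
      exact hne (by rw [show j = t from by simpa using hij])
    have hip : i < p := by omega
    have : ((p.choose i : ℕ) : ZMod p) = 0 := by
      rw [ZMod.natCast_eq_zero_iff]
      exact Nat.Prime.dvd_choose_self (Fact.out) hi0 hip
    push_cast
    push_cast at this
    rw [this, zero_mul]
  · intro h
    exact absurd (by simp : ((0:ℕ), t) ∈ Finset.HasAntidiagonal.antidiagonal t) h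

private lemma aux_inner (p n : ℕ) (hn : n < p) :
    ∑ t ∈ Finset.range p, (2 : ZMod p) ^ t * (n.choose t : ZMod p) = 3 ^ n := by
  have hsub : Finset.range (n + 1) ⊆ Finset.range p := by
    intro x hx; simp at hx ⊢; omega
  rw [← Finset.sum_subset hsub (by
    intro x _ hx
    simp only [Finset.mem_range, not_lt] at hx
    rw [Nat.choose_eq_zero_of_lt (by omega), Nat.cast_zero, mul_zero])]
  have := add_pow (2 : ZMod p) 1 n
  simp only [one_pow, mul_one] at this
  norm_num at this
  rw [← this]

theorem stmt_9 (p : ℕ) (hp : p.Prime) (h5 : 5 < p) :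
    (5 * ∑ s ∈ Finset.range p,
        (-1 : ℤ) ^ s * ∑ t ∈ Finset.range p, 2 ^ t * ((2 * s).choose t : ℤ)) ≡
      3 * (-1) ^ ((p - 1) / 2) + 2 [ZMOD (p : ℤ)] := by
  haveI : Fact p.Prime := ⟨hp⟩
  rw [← ZMod.intCast_eq_intCast_iff]
  push_cast
  set m := (p - 1) / 2 with hm
  have hodd : p % 2 = 1 := by
    obtain ⟨k, hk⟩ := hp.odd_of_ne_two (by omega)
    omega
  have hndvd : ∀ n : ℕ, 0 < n → n < p → ((n : ℕ) : ZMod p) ≠ 0 := by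
    intro n hn hnp h
    rw [ZMod.natCast_eq_zero_iff] at h
    have := Nat.le_of_dvd hn h
    omega
  have h2 : (2 : ZMod p) ≠ 0 := by have := hndvd 2 (by norm_num) (by omega); exact_mod_cast this
  have h3 : (3 : ZMod p) ≠ 0 := by have := hndvd 3 (by norm_num) (by omega); exact_mod_cast this
  have h5' : (5 : ZMod p) ≠ 0 := by have := hndvd 5 (by norm_num) (by omega); exact_mod_cast this
  have h10 : (10 : ZMod p) ≠ 0 := by
    have : (10 : ZMod p) = 2 * 5 := by norm_num
    rw [this]; exact mul_ne_zero h2 h5'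
  have h3p : (3 : ZMod p) ^ (p - 1) = 1 := ZMod.pow_card_sub_one_eq_one h3
  have hx0 : (-9 : ZMod p) ≠ 0 := by
    have h9 : (9 : ZMod p) = 3 * 3 := by norm_num
    simp only [neg_ne_zero, h9]
    exact mul_ne_zero h3 h3
  have hx1 : (-9 : ZMod p) ≠ 1 := by
    intro h
    apply h10
    linear_combination -h
  have hxp : (-9 : ZMod p) ^ (p - 1) = 1 := ZMod.pow_card_sub_one_eq_one hx0
  have h3pp : (3 : ZMod p) ^ p = 3 := by
    have h' : (3 : ZMod p) ^ (p - 1 + 1) = 3 := by rw [pow_succ, h3p, one_mul]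
    rwa [Nat.sub_add_cancel (by omega)] at h'
  have hxpe : (-9 : ZMod p) ^ p = -9 := by
    have h' : (-9 : ZMod p) ^ (p - 1 + 1) = -9 := by rw [pow_succ, hxp, one_mul]
    rwa [Nat.sub_add_cancel (by omega)] at h'
  have hxm : (-9 : ZMod p) ^ m = (-1) ^ m := by
    have : (-9 : ZMod p) = -1 * 3 ^ 2 := by norm_num
    rw [this, mul_pow, ← pow_mul, show 2 * m = p - 1 by omega, h3p, mul_one]
  have e1 : ∀ s ∈ Finset.range (m + 1),
      (-1 : ZMod p) ^ s * ∑ t ∈ Finset.range p, (2 : ZMod p) ^ t * (((2 * s).choose t : ℕ) : ZMod p)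
        = (-9 : ZMod p) ^ s := by
    intro s hs
    simp only [Finset.mem_range] at hs
    rw [aux_inner p (2 * s) (by omega), pow_mul, ← mul_pow]
    norm_num
  have e2 : ∀ s ∈ Finset.Ico (m + 1) p,
      (-1 : ZMod p) ^ s * ∑ t ∈ Finset.range p, (2 : ZMod p) ^ t * (((2 * s).choose t : ℕ) : ZMod p)
        = (-9 : ZMod p) ^ s * (3 : ZMod p)⁻¹ := by
    intro s hs
    simp only [Finset.mem_Ico] at hs
    have h2s : 2 * s = p + (2 * s - p) := by omega
    have hinner : ∑ t ∈ Finset.range p, (2 : ZMod p) ^ t * (((2 * s).choose t : ℕ) : ZMod p)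
        = 3 ^ (2 * s - p) := by
      rw [Finset.sum_congr rfl (fun t ht => ?_), aux_inner p (2 * s - p) (by omega)]
      rw [Finset.mem_range] at ht
      have hc := aux_choose p (2 * s - p) t ht
      rw [← h2s] at hc
      rw [hc]
    rw [hinner]
    have hxs : (-9 : ZMod p) ^ s = (-1) ^ s * (3 * 3 ^ (2 * s - p)) := by
      have h9 : (-9 : ZMod p) = -1 * 3 ^ 2 := by norm_num
      rw [h9, mul_pow, ← pow_mul]
      congr 1
      have hpa := pow_add (3 : ZMod p) p (2 * s - p)
      rw [← h2s] at hpa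
      rw [hpa, h3pp]
    rw [hxs]
    field_simp
  have hsplit : ∀ f : ℕ → ZMod p, ∑ s ∈ Finset.range p, f s
      = ∑ s ∈ Finset.range (m + 1), f s + ∑ s ∈ Finset.Ico (m + 1) p, f s := by
    intro f
    rw [Finset.range_eq_Ico,
      ← Finset.sum_Ico_consecutive f (Nat.zero_le (m + 1)) (by omega : m + 1 ≤ p),
      ← Finset.range_eq_Ico]
  rw [hsplit, Finset.sum_congr rfl e1, Finset.sum_congr rfl e2, ← Finset.sum_mul,
    Finset.sum_Ico_eq_sub _ (by omega : m + 1 ≤ p),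
    geom_sum_eq hx1 p, geom_sum_eq hx1 (m + 1), hxpe, pow_succ, hxm]
  have hne : (-9 - 1 : ZMod p) ≠ 0 := by
    intro h
    apply h10
    linear_combination -h
  field_simp
  ring
end

section
/- Let p > 3 be a prime. Then, in the ring ℤ/p²ℤ, 2^p · p · ∑_{k ∈ ℕ, 0 < 3k < p} 2^k · binom(3k, k) · k^{-1} = 3(2 − 2^p), where k^{-1} denotes the inverse of k in ℤ/p²ℤ (each such k satisfies 0 < k < p, so k is invertible modulo p²). -/
open Finset Polynomial

namespace Stmt12


abbrev D := Zsqrtd (-1)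

def c : D := ⟨-1, 1⟩
def s : D := ⟨-1, -1⟩

lemma s_eq_star : s = star c := rfl
lemma c_mul_s : c * s = 2 := by decide
lemma c_sq : c ^ 2 = -(s ^ 2) := by decide

def tZ (p : ℕ) : ℤ := (c ^ p + s ^ p).re

lemma tZ_cast (p : ℕ) : ((tZ p : ℤ) : D) = c ^ p + s ^ p := by
  have him : (c ^ p + s ^ p).im = 0 := by
    simp [s_eq_star, ← star_pow, Zsqrtd.im_add, Zsqrtd.im_star]
  apply Zsqrtd.ext
  · simp [tZ, Zsqrtd.re_intCast]
  · simp [Zsqrtd.im_intCast, him]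

lemma tZ_sq {p : ℕ} (hodd : Odd p) : tZ p ^ 2 = 2 ^ (p + 1) := by
  have key : (c ^ p + s ^ p) ^ 2 = 2 ^ (p + 1) := by
    have h1 : (c ^ p + s ^ p) ^ 2 = (c ^ 2) ^ p + (s ^ 2) ^ p + 2 * (c * s) ^ p := by ring
    rw [h1, c_sq, hodd.neg_pow, c_mul_s]
    ring
  have : ((tZ p ^ 2 : ℤ) : D) = ((2 ^ (p + 1) : ℤ) : D) := by
    push_cast
    rw [tZ_cast, key]
  exact_mod_cast this

lemma p_not_unit {p : ℕ} (hp : p.Prime) : (p : D) ∈ nonunits D := by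
  intro h
  have h1 : (p : D) ∣ ((1 : ℤ) : D) := isUnit_iff_dvd_one.mp h
  rw [show ((p : ℕ) : D) = ((p : ℤ) : D) by push_cast; ring] at h1
  rw [Zsqrtd.intCast_dvd_intCast] at h1
  exact hp.one_lt.ne' (by exact_mod_cast Int.eq_one_of_dvd_one (by positivity) h1)

lemma tZ_mod {p : ℕ} (hp : p.Prime) (hodd : Odd p) : (p : ℤ) ∣ tZ p + 2 := by
  haveI : Fact p.Prime := ⟨hp⟩
  haveI : CharP (D ⧸ (Ideal.span {(p : D)} : Ideal D)) p := CharP.quotient D p (p_not_unit hp)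
  set φ : D →+* D ⧸ (Ideal.span {(p : D)} : Ideal D) :=
    Ideal.Quotient.mk (Ideal.span {(p : D)}) with hφ
  have frob : ∀ x y : D ⧸ (Ideal.span {(p : D)} : Ideal D), (x + y) ^ p = x ^ p + y ^ p :=
    fun x y => add_pow_char x y p
  have hc : c = -1 + ⟨0, 1⟩ := by decide
  have hs : s = -1 - ⟨0, 1⟩ := by decide
  have h2 : (φ c) ^ p + (φ s) ^ p = -2 := by
    have hφc : φ c = -1 + φ ⟨0, 1⟩ := by rw [hc]; simp
    have hφs : φ s = -1 - φ ⟨0, 1⟩ := by rw [hs]; simp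
    rw [hφc, hφs, sub_eq_add_neg, frob, frob, hodd.neg_pow (φ ⟨0, 1⟩), hodd.neg_one_pow]
    ring
  have hfrob : φ ((tZ p + 2 : ℤ) : D) = 0 := by
    have hrepr : ((tZ p + 2 : ℤ) : D) = c ^ p + s ^ p + 2 := by
      push_cast [← tZ_cast p]; ring
    rw [hrepr, map_add, map_add, map_pow, map_pow, h2, map_ofNat]
    ring
  have hmem : ((tZ p + 2 : ℤ) : D) ∈ (Ideal.span {(p : D)} : Ideal D) :=
    Ideal.Quotient.eq_zero_iff_mem.mp hfrob
  rw [Ideal.mem_span_singleton,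
    show ((p : ℕ) : D) = ((p : ℤ) : D) by push_cast; ring,
    Zsqrtd.intCast_dvd_intCast] at hmem
  exact hmem

lemma fermat2 {p : ℕ} (hp : p.Prime) (h2 : 2 < p) : (p : ℤ) ∣ 2 ^ (p - 1) - 1 := by
  haveI : Fact p.Prime := ⟨hp⟩
  have h2p : (2 : ZMod p) ≠ 0 := by
    intro h
    have h' : ((2 : ℤ) : ZMod p) = 0 := by exact_mod_cast h
    have := (ZMod.intCast_zmod_eq_zero_iff_dvd 2 p).mp h'
    have := Int.le_of_dvd (by norm_num) this
    omega
  have hf := ZMod.pow_card_sub_one_eq_one h2p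
  have hz : ((2 ^ (p - 1) - 1 : ℤ) : ZMod p) = 0 := by
    push_cast
    rw [hf]; ring
  exact_mod_cast (ZMod.intCast_zmod_eq_zero_iff_dvd _ p).mp hz

lemma tZ_cong {p : ℕ} (hp : p.Prime) (h3 : 3 < p) :
    (p : ℤ) ^ 2 ∣ tZ p + 1 + 2 ^ (p - 1) := by
  have hodd : Odd p := hp.odd_of_ne_two (by omega)
  have hpint : Prime (p : ℤ) := Nat.prime_iff_prime_int.mp hp
  set w : ℤ := 2 ^ ((p - 1) / 2) with hw
  have hww : w * w = 2 ^ (p - 1) := by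
    rw [hw, ← pow_add]
    congr 1
    obtain ⟨m, hm⟩ := hodd
    omega
  have hsq : tZ p ^ 2 = (2 * w) ^ 2 := by
    rw [tZ_sq hodd]
    have h4 : 2 ^ (p + 1) = 4 * (w * w) := by
      have : p + 1 = (p - 1) + 2 := by omega
      rw [hww, this, pow_add]; ring
    rw [h4]; ring
  have h0 : (tZ p - 2 * w) * (tZ p + 2 * w) = 0 := by nlinarith [hsq]
  have hmod := tZ_mod hp hodd
  have hp2 : ¬ ((p : ℤ) ∣ 2) := by
    intro h
    have := Int.le_of_dvd (by norm_num) h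
    omega
  rcases mul_eq_zero.mp h0 with h | h
  · -- tZ p = 2w
    have ht : tZ p = 2 * w := by linarith
    have hd : (p : ℤ) ∣ 2 * (w + 1) := by
      have he : 2 * (w + 1) = tZ p + 2 := by rw [ht]; ring
      rw [he]; exact hmod
    have hpw : (p : ℤ) ∣ w + 1 := ((hpint.dvd_mul).mp hd).resolve_left hp2
    have he2 : tZ p + 1 + 2 ^ (p - 1) = (w + 1) ^ 2 := by
      rw [ht, ← hww]; ring
    rw [he2]
    exact pow_dvd_pow_of_dvd hpw 2
  · have ht : tZ p = -(2 * w) := by linarith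
    have hd : (p : ℤ) ∣ 2 * (w - 1) := by
      have he : 2 * (w - 1) = -(tZ p + 2) := by rw [ht]; ring
      rw [he]; exact dvd_neg.mpr hmod
    have hpw : (p : ℤ) ∣ w - 1 := ((hpint.dvd_mul).mp hd).resolve_left hp2
    have he2 : tZ p + 1 + 2 ^ (p - 1) = (w - 1) ^ 2 := by
      rw [ht, ← hww]; ring
    rw [he2]
    exact pow_dvd_pow_of_dvd hpw 2



lemma c_add_s : c + s = -2 := by decide

noncomputable def Epoly (p : ℕ) (a : D) : D[X] :=
  ∑ j ∈ Finset.Ioo 0 p, C (a ^ (p - j) * ((p.choose j / p : ℕ) : D)) * X ^ j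

lemma Epoly_coeff (p : ℕ) (a : D) (m : ℕ) (hm : ¬(0 < m ∧ m < p)) :
    (Epoly p a).coeff m = 0 := by
  rw [Epoly, finset_sum_coeff]
  apply Finset.sum_eq_zero
  intro j hj
  rw [Finset.mem_Ioo] at hj
  rw [coeff_C_mul, coeff_X_pow, if_neg (by rintro rfl; exact hm hj), mul_zero]

lemma binom_expand (p : ℕ) (hp : p.Prime) (a : D) :
    (X + C a) ^ p = X ^ p + C (a ^ p) + C (p : D) * Epoly p a := by
  rw [add_pow]
  have hsplit : Finset.range (p + 1) = insert 0 (insert p (Finset.Ioo 0 p)) := by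
    ext x
    simp only [Finset.mem_range, Finset.mem_insert, Finset.mem_Ioo]
    omega
  have h0 : (0 : ℕ) ∉ insert p (Finset.Ioo 0 p) := by
    have hpos := hp.pos
    simp only [Finset.mem_insert, Finset.mem_Ioo]
    push_neg
    omega
  have hpn : p ∉ Finset.Ioo 0 p := by simp
  rw [hsplit, Finset.sum_insert h0, Finset.sum_insert hpn]
  have e0 : (X : D[X]) ^ 0 * C a ^ (p - 0) * (p.choose 0 : D[X]) = C (a ^ p) := by
    simp [← map_pow]
  have ep : (X : D[X]) ^ p * C a ^ (p - p) * (p.choose p : D[X]) = X ^ p := by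
    simp
  rw [e0, ep, Epoly, Finset.mul_sum]
  have : ∀ j ∈ Finset.Ioo 0 p,
      (X : D[X]) ^ j * C a ^ (p - j) * (p.choose j : D[X]) =
        C (p : D) * (C (a ^ (p - j) * ((p.choose j / p : ℕ) : D)) * X ^ j) := by
    intro j hj
    rw [Finset.mem_Ioo] at hj
    have hdvd : p ∣ p.choose j := hp.dvd_choose_self hj.1.ne' hj.2
    have hval : ((p.choose j : ℕ) : D) = (p : D) * ((p.choose j / p : ℕ) : D) := by
      rw [← Nat.cast_mul, Nat.mul_div_cancel' hdvd]
    rw [show ((p.choose j : ℕ) : D[X]) = C ((p.choose j : ℕ) : D) from (map_natCast C _).symm,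
      hval, map_mul, map_mul, ← map_pow]
    ring
  rw [Finset.sum_congr rfl this]
  ring

lemma coeff_MMM (p : ℕ) (hp : 0 < p) (a b c' : D) :
    (((X : D[X]) ^ p + C a) * (X ^ p + C b) * (X ^ p + C c')).coeff (2 * p) = a + b + c' := by
  have h : ((X : D[X]) ^ p + C a) * (X ^ p + C b) * (X ^ p + C c') =
      X ^ (3 * p) + C (a + b + c') * X ^ (2 * p)
        + C (a * b + a * c' + b * c') * X ^ p + C (a * b * c') := by
    simp only [map_add, map_mul]
    ring
  rw [h]
  simp only [coeff_add, coeff_C_mul, coeff_X_pow, coeff_C]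
  rw [if_neg (show ¬(2 * p = p) by omega), if_neg (show ¬(2 * p = 0) by omega)]
  simp [hp.ne']

lemma coeff_EMM (p : ℕ) (hp : 0 < p) (Ea : D[X])
    (hE : ∀ m, ¬(0 < m ∧ m < p) → Ea.coeff m = 0) (b c' : D) :
    (Ea * ((X : D[X]) ^ p + C b) * (X ^ p + C c')).coeff (2 * p) = 0 := by
  have h : Ea * ((X : D[X]) ^ p + C b) * (X ^ p + C c') =
      Ea * X ^ (2 * p) + C (b + c') * (Ea * X ^ p) + C (b * c') * Ea := by
    simp only [map_add, map_mul]
    ring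
  rw [h]
  simp only [coeff_add, coeff_C_mul, coeff_mul_X_pow']
  rw [if_pos le_rfl, if_pos (by omega : p ≤ 2 * p)]
  rw [hE _ (by omega), hE _ (by omega), hE _ (by omega)]
  ring

lemma coeff_Qpow (p : ℕ) (hp : p.Prime) (hodd : Odd p) :
    ∃ v : D, ((X ^ 3 + X ^ 2 - C 2 : D[X]) ^ p).coeff (2 * p)
      = -1 - (c ^ p + s ^ p) + (p : D) ^ 2 * v := by
  have expand3 : ∀ α β γ : D, ((X : D[X]) + C α) * (X + C β) * (X + C γ) =
      X ^ 3 + C (α + β + γ) * X ^ 2 + C (α * β + α * γ + β * γ) * X + C (α * β * γ) := by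
    intro α β γ
    simp only [map_add, map_mul]
    ring
  have e1 : (-1 : D) + -c + -s = 1 := by linear_combination -c_add_s
  have e2 : (-1 : D) * -c + (-1) * -s + -c * -s = 0 := by linear_combination c_add_s + c_mul_s
  have e3 : (-1 : D) * -c * -s = -2 := by linear_combination -c_mul_s
  have hfact : (X ^ 3 + X ^ 2 - C 2 : D[X]) = (X + C (-1)) * (X + C (-c)) * (X + C (-s)) := by
    rw [expand3, e1, e2, e3]
    simp only [map_one, map_zero, one_mul, zero_mul, add_zero, map_neg, map_ofNat]
    ring
  have h1 := binom_expand p hp (-1)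
  have h2 := binom_expand p hp (-c)
  have h3 := binom_expand p hp (-s)
  rw [hodd.neg_one_pow] at h1
  rw [hodd.neg_pow] at h2
  rw [hodd.neg_pow] at h3
  set E1 := Epoly p (-1)
  set E2 := Epoly p (-c)
  set E3 := Epoly p (-s)
  have hring : ∀ m1 m2 m3 f1 f2 f3 q : D[X],
      (m1 + q * f1) * (m2 + q * f2) * (m3 + q * f3) =
        m1 * m2 * m3
          + q * (f1 * m2 * m3 + f2 * m1 * m3 + f3 * m1 * m2)
          + q ^ 2 * (f1 * f2 * m3 + f1 * f3 * m2 + f2 * f3 * m1 + q * (f1 * f2 * f3)) := by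
    intros
    ring
  have hQp : (X ^ 3 + X ^ 2 - C 2 : D[X]) ^ p =
      ((X : D[X]) ^ p + C (-1)) * (X ^ p + C (-(c ^ p))) * (X ^ p + C (-(s ^ p)))
        + C (p : D) * (E1 * (X ^ p + C (-(c ^ p))) * (X ^ p + C (-(s ^ p)))
            + E2 * (X ^ p + C (-1)) * (X ^ p + C (-(s ^ p)))
            + E3 * (X ^ p + C (-1)) * (X ^ p + C (-(c ^ p))))
        + C (p : D) ^ 2 * (E1 * E2 * (X ^ p + C (-(s ^ p))) + E1 * E3 * (X ^ p + C (-(c ^ p)))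
            + E2 * E3 * (X ^ p + C (-1)) + C (p : D) * (E1 * E2 * E3)) := by
    rw [hfact, mul_pow, mul_pow, h1, h2, h3]
    ring
  refine ⟨(E1 * E2 * (X ^ p + C (-(s ^ p))) + E1 * E3 * (X ^ p + C (-(c ^ p)))
      + E2 * E3 * (X ^ p + C (-1)) + C (p : D) * (E1 * E2 * E3)).coeff (2 * p), ?_⟩
  rw [hQp]
  rw [coeff_add, coeff_add, ← map_pow, coeff_C_mul, coeff_C_mul]
  rw [coeff_MMM p hp.pos]
  rw [coeff_add, coeff_add]
  rw [coeff_EMM p hp.pos E1 (Epoly_coeff p (-1)),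
    coeff_EMM p hp.pos E2 (Epoly_coeff p (-c)),
    coeff_EMM p hp.pos E3 (Epoly_coeff p (-s))]
  ring



lemma chooseID (p k : ℕ) :
    p.choose k * (p - k).choose (2 * k) = p.choose (3 * k) * (3 * k).choose k := by
  by_cases h : 3 * k ≤ p
  · have h2 := Nat.choose_mul (n := p) (k := 3 * k) (s := k) (by omega)
    rw [show 3 * k - k = 2 * k by omega] at h2
    exact h2.symm
  · rw [Nat.choose_eq_zero_of_lt (show p < 3 * k by omega),
      Nat.choose_eq_zero_of_lt (show p - k < 2 * k by omega)]
    ring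

lemma coeff_Qpow_sum (p : ℕ) (hp : 0 < p) :
    ((X ^ 3 + X ^ 2 - C 2 : D[X]) ^ p).coeff (2 * p)
      = ∑ j ∈ Finset.range (p + 1),
          (-2 : D) ^ (p - j) * ((j.choose (2 * p - 2 * j) : ℕ) : D) * ((p.choose j : ℕ) : D) := by
  have hQ : (X ^ 3 + X ^ 2 - C 2 : D[X]) = X ^ 2 * (X + 1) + C (-2) := by
    simp only [map_neg, map_ofNat]
    ring
  rw [hQ, add_pow, finset_sum_coeff]
  apply Finset.sum_congr rfl
  intro j hj
  rw [Finset.mem_range] at hj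
  have hterm : ((X : D[X]) ^ 2 * (X + 1)) ^ j * C (-2) ^ (p - j) * (p.choose j : D[X]) =
      C ((-2 : D) ^ (p - j) * ((p.choose j : ℕ) : D)) * (X ^ (2 * j) * (X + 1) ^ j) := by
    rw [mul_pow, ← pow_mul,
      show ((p.choose j : ℕ) : D[X]) = C ((p.choose j : ℕ) : D) from (map_natCast C _).symm,
      ← map_pow, map_mul]
    ring
  rw [hterm, coeff_C_mul, coeff_X_pow_mul', if_pos (by omega : 2 * j ≤ 2 * p),
    coeff_X_add_one_pow]
  ring

/-- the integer A -/
def AZ (p : ℕ) : ℤ :=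
  ∑ k ∈ Finset.range p, (-2 : ℤ) ^ k * (p.choose (3 * k) : ℤ) * ((3 * k).choose k : ℤ)

lemma sum_eq_AZ (p : ℕ) (hp : 0 < p) :
    (∑ j ∈ Finset.range (p + 1),
        (-2 : D) ^ (p - j) * ((j.choose (2 * p - 2 * j) : ℕ) : D) * ((p.choose j : ℕ) : D))
      = ((AZ p : ℤ) : D) := by
  rw [← Finset.sum_range_reflect]
  have step : ∀ k ∈ Finset.range (p + 1),
      (-2 : D) ^ (p - (p + 1 - 1 - k)) * (((p + 1 - 1 - k).choose (2 * p - 2 * (p + 1 - 1 - k)) : ℕ) : D)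
          * ((p.choose (p + 1 - 1 - k) : ℕ) : D)
        = (-2 : D) ^ k * ((p.choose (3 * k) : ℕ) : D) * (((3 * k).choose k : ℕ) : D) := by
    intro k hk
    rw [Finset.mem_range] at hk
    have h1 : p + 1 - 1 - k = p - k := by omega
    have h2 : p - (p - k) = k := by omega
    have h3 : 2 * p - 2 * (p - k) = 2 * k := by omega
    have h4 : p.choose (p - k) = p.choose k := Nat.choose_symm (by omega)
    rw [h1, h2, h3, h4]
    have h5 : ((p.choose k * (p - k).choose (2 * k) : ℕ) : D)
        = ((p.choose (3 * k) * (3 * k).choose k : ℕ) : D) := by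
      rw [chooseID]
    push_cast at h5
    linear_combination ((-2 : D) ^ k) * h5
  rw [Finset.sum_congr rfl step]
  rw [Finset.sum_range_succ, Nat.choose_eq_zero_of_lt (show p < 3 * p by omega)]
  simp only [Nat.cast_zero, mul_zero, zero_mul, add_zero]
  unfold AZ
  push_cast
  rfl



lemma choose_p_sub_one {p : ℕ} (hp : p.Prime) :
    ∀ j, j < p → (((p - 1).choose j : ℕ) : ZMod p) = (-1) ^ j := by
  intro j
  induction j with
  | zero => simp
  | succ n ih =>
    intro hj
    have hn := ih (by omega)
    have hcs : ((p.choose (n + 1) : ℕ) : ZMod p) = 0 :=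
      (ZMod.natCast_eq_zero_iff _ _).mpr (hp.dvd_choose_self (Nat.succ_ne_zero n) hj)
    have hrec : p.choose (n + 1) = (p - 1).choose n + (p - 1).choose (n + 1) := by
      conv_lhs => rw [← Nat.succ_pred_eq_of_pos hp.pos]
      exact Nat.choose_succ_succ _ _
    rw [hrec] at hcs
    push_cast at hcs
    rw [hn] at hcs
    have : (((p - 1).choose (n + 1) : ℕ) : ZMod p) = -(-1) ^ n := by linear_combination hcs
    rw [this]
    ring

lemma KC {p : ℕ} (hp : p.Prime) {j : ℕ} (hj : 0 < j) (hjp : j < p) :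
    ((j : ℕ) : ZMod (p ^ 2)) * ((p.choose j : ℕ) : ZMod (p ^ 2))
      = ((p : ℕ) : ZMod (p ^ 2)) * (-1) ^ (j - 1) := by
  have hnat : p * ((p - 1).choose (j - 1)) = p.choose j * j := by
    have h := Nat.add_one_mul_choose_eq (p - 1) (j - 1)
    have hpp : p - 1 + 1 = p := by omega
    have hjj : j - 1 + 1 = j := by omega
    rwa [hpp, hjj] at h
  -- lift mod p congruence to an integer equation
  have hz := choose_p_sub_one hp (j - 1) (by omega)
  have hdvd : (p : ℤ) ∣ ((p - 1).choose (j - 1) : ℤ) - (-1) ^ (j - 1) := by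
    have : ((((p - 1).choose (j - 1) : ℤ) - (-1) ^ (j - 1) : ℤ) : ZMod p) = 0 := by
      push_cast
      rw [hz]
      ring
    exact_mod_cast (ZMod.intCast_zmod_eq_zero_iff_dvd _ p).mp this
  obtain ⟨z, hzz⟩ := hdvd
  -- integer identity: j * choose p j = p * ((-1)^(j-1) + p * z)
  have hint : (j : ℤ) * (p.choose j : ℤ) = (p : ℤ) * ((-1) ^ (j - 1) + (p : ℤ) * z) := by
    have h1 : ((p - 1).choose (j - 1) : ℤ) = (-1) ^ (j - 1) + (p : ℤ) * z := by
      linear_combination hzz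
    have h2 : (p : ℤ) * ((p - 1).choose (j - 1) : ℤ) = (p.choose j : ℤ) * (j : ℤ) := by
      exact_mod_cast congrArg (Nat.cast : ℕ → ℤ) hnat
    rw [h1] at h2
    linear_combination -h2
  have hcast : (((j : ℤ) * (p.choose j : ℤ) : ℤ) : ZMod (p ^ 2))
      = ((((p : ℤ) * ((-1) ^ (j - 1) + (p : ℤ) * z) : ℤ)) : ZMod (p ^ 2)) := by
    rw [hint]
  push_cast at hcast
  rw [hcast]
  have hp2 : ((p : ZMod (p ^ 2)) * (p : ZMod (p ^ 2))) = 0 := by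
    have : (((p ^ 2 : ℕ) : ℤ) : ZMod (p ^ 2)) = 0 := by
      rw [ZMod.intCast_zmod_eq_zero_iff_dvd]
    push_cast at this
    linear_combination this
  ring_nf
  linear_combination (z : ZMod (p ^ 2)) * hp2


end Stmt12

open Stmt12 in
theorem stmt_12 (p : ℕ) (hp : p.Prime) (h3 : 3 < p) :
    ((2 : ZMod (p ^ 2)) ^ p * (p : ZMod (p ^ 2)) *
        ∑ k ∈ (Finset.range p).filter (fun k => 0 < 3 * k ∧ 3 * k < p),
          2 ^ k * ((3 * k).choose k : ZMod (p ^ 2)) * (k : ZMod (p ^ 2))⁻¹) =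
      3 * (2 - 2 ^ p) := by
  have hp0 : 0 < p := by omega
  have hodd : Odd p := hp.odd_of_ne_two (by omega)
  set R := ZMod (p ^ 2)
  -- the divisibility for A
  have hA : (p : ℤ) ^ 2 ∣ AZ p + 1 + tZ p := by
    obtain ⟨v, hv⟩ := coeff_Qpow p hp hodd
    rw [coeff_Qpow_sum p hp0, sum_eq_AZ p hp0, ← tZ_cast] at hv
    have heq : ((AZ p + 1 + tZ p : ℤ) : D) = (((p : ℤ) ^ 2 : ℤ) : D) * v := by
      push_cast
      push_cast at hv
      linear_combination hv
    exact (Zsqrtd.intCast_dvd_intCast _ _).mp ⟨v, heq⟩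
  have hAR : ((AZ p : ℤ) : R) = -1 - ((tZ p : ℤ) : R) := by
    have h0 : ((AZ p + 1 + tZ p : ℤ) : R) = 0 := by
      rw [ZMod.intCast_zmod_eq_zero_iff_dvd]
      exact_mod_cast hA
    push_cast at h0
    linear_combination h0
  have htR : ((tZ p : ℤ) : R) = -1 - (2 : R) ^ (p - 1) := by
    have h0 : ((tZ p + 1 + 2 ^ (p - 1) : ℤ) : R) = 0 := by
      rw [ZMod.intCast_zmod_eq_zero_iff_dvd]
      exact_mod_cast tZ_cong hp h3
    push_cast at h0
    linear_combination h0
  -- Fermat quotient square vanishes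
  have hpp : ((p : ℕ) : R) * ((p : ℕ) : R) = 0 := by
    have h0 : (((p ^ 2 : ℕ)) : R) = 0 := ZMod.natCast_self _
    push_cast at h0
    linear_combination h0
  have hu : ((2 : R) ^ (p - 1) - 1) ^ 2 = 0 := by
    obtain ⟨q, hq⟩ := fermat2 hp (by omega)
    have h1 : (2 : R) ^ (p - 1) - 1 = ((p : ℕ) : R) * ((q : ℤ) : R) := by
      have := congrArg (fun z : ℤ => (z : R)) hq
      push_cast at this
      simp only [R] at this ⊢
      push_cast at this
      linear_combination this
    rw [h1]
    linear_combination (((q : ℤ) : R)) ^ 2 * hpp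
  -- per-term rewrite
  set g : ℕ → R := fun k => (-2 : R) ^ k * (((3 * k).choose k : ℕ) : R) * ((p.choose (3 * k) : ℕ) : R)
    with hg
  have stepA : ∀ k ∈ (Finset.range p).filter (fun k => 0 < 3 * k ∧ 3 * k < p),
      (p : R) * ((2 : R) ^ k * (((3 * k).choose k : ℕ) : R) * ((k : ℕ) : R)⁻¹) = -3 * g k := by
    intro k hk
    rw [Finset.mem_filter, Finset.mem_range] at hk
    obtain ⟨hkr, hk1, hk2⟩ := hk
    have hk0 : 0 < k := by omega
    have hKC := KC hp (j := 3 * k) (by omega) hk2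
    push_cast at hKC
    have hsign : (-1 : R) ^ (3 * k - 1) = -(-1) ^ k := by
      have ha : (-1 : R) ^ (3 * k - 1) * (-1) = (-1) ^ (3 * k) := by
        rw [← pow_succ]
        congr 1
        omega
      have hb : (-1 : R) ^ (3 * k) = (-1) ^ k := by
        rw [show 3 * k = k + 2 * k by ring, pow_add, pow_mul, neg_one_sq, one_pow, mul_one]
      linear_combination (-1 : R) * ha - hb
    have hKC' : 3 * ((k : ℕ) : R) * ((p.choose (3 * k) : ℕ) : R)
        = -((p : ℕ) : R) * (-1) ^ k := by
      rw [hsign] at hKC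
      linear_combination hKC
    have hcop : Nat.Coprime k (p ^ 2) := by
      have hckp : Nat.Coprime k p :=
        Nat.Coprime.symm ((hp.coprime_iff_not_dvd).mpr
          (fun hdvd => by have := Nat.le_of_dvd hk0 hdvd; omega))
      exact hckp.pow_right 2
    have hkinv : ((k : ℕ) : R) * ((k : ℕ) : R)⁻¹ = 1 := ZMod.coe_mul_inv_eq_one k hcop
    have hσ2 : ((-1 : R) ^ k) ^ 2 = 1 := by
      rw [← pow_mul, mul_comm, pow_mul, neg_one_sq, one_pow]
    have hneg2 : (-2 : R) ^ k = (-1) ^ k * 2 ^ k := by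
      rw [← neg_one_mul, mul_pow]
    rw [hg]
    simp only
    rw [hneg2]
    linear_combination ((-1 : R) ^ k * 2 ^ k * (((3 * k).choose k : ℕ) : R) * ((k : ℕ) : R)⁻¹) * hKC'
      - (3 * (-1 : R) ^ k * 2 ^ k * (((3 * k).choose k : ℕ) : R) * ((p.choose (3 * k) : ℕ) : R)) * hkinv
      - ((p : R) * 2 ^ k * (((3 * k).choose k : ℕ) : R) * ((k : ℕ) : R)⁻¹) * hσ2
  -- sum over the complement of the filter
  have hnot : ∑ k ∈ (Finset.range p).filter (fun k => ¬(0 < 3 * k ∧ 3 * k < p)), g k = 1 := by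
    rw [Finset.sum_eq_single_of_mem 0
      (Finset.mem_filter.mpr ⟨Finset.mem_range.mpr hp0, by simp⟩)]
    · simp [hg]
    · intro b hb hb0
      rw [Finset.mem_filter, Finset.mem_range] at hb
      obtain ⟨hbr, hbc⟩ := hb
      push_neg at hbc
      have hge : p ≤ 3 * b := hbc (by omega)
      have hlt : p < 3 * b := by
        rcases Nat.eq_or_lt_of_le hge with heq | hlt
        · exfalso
          have h3d : (3 : ℕ) ∣ p := ⟨b, heq⟩
          have := (Nat.prime_dvd_prime_iff_eq Nat.prime_three hp).mp h3d
          omega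
        · exact hlt
      rw [hg]
      simp only
      rw [Nat.choose_eq_zero_of_lt hlt]
      simp
  have hgsum : ∑ k ∈ Finset.range p, g k = ((AZ p : ℤ) : R) := by
    unfold AZ
    push_cast
    simp only [R]
    push_cast
    apply Finset.sum_congr rfl
    intros
    ring
  have hF : ∑ k ∈ (Finset.range p).filter (fun k => 0 < 3 * k ∧ 3 * k < p), g k
      = -2 - ((tZ p : ℤ) : R) := by
    have hsplit := Finset.sum_filter_add_sum_filter_not (Finset.range p)
      (fun k => 0 < 3 * k ∧ 3 * k < p) g
    rw [hnot, hgsum, hAR] at hsplit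
    linear_combination hsplit
  -- final assembly
  rw [mul_assoc, Finset.mul_sum, Finset.sum_congr rfl stepA, ← Finset.mul_sum, hF, htR]
  have h2p : (2 : R) ^ p = 2 ^ (p - 1) * 2 := by
    rw [← pow_succ]
    congr 1
    omega
  linear_combination (6 - 3 * (2 : R) ^ (p - 1)) * h2p - 6 * hu
end

section
/- Let p be a prime and let k be a natural number with 2p ≤ 3k ≤ 3p − 3. Then p divides binom(3k, k). -/
theorem stmt_15 (p : ℕ) (hp : p.Prime) (k : ℕ) (h1 : 2 * p ≤ 3 * k) (h2 : 3 * k ≤ 3 * p - 3) :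
    p ∣ (3 * k).choose k := by
  have hp1 : 2 ≤ p := hp.two_le
  have hk : k < p := by omega
  have hkp2 : p ≤ 2 * k := by omega
  have hkp2' : 2 * k < 2 * p := by omega
  by_contra hnd
  have h0 : emultiplicity p ((3 * k).choose k) = 0 := emultiplicity_eq_zero.mpr hnd
  rw [hp.emultiplicity_choose (b := Nat.log p (3 * k) + 1) (by omega) (Nat.lt_succ_self _)] at h0
  have hmem : 1 ∈ {i ∈ Finset.Ico 1 (Nat.log p (3 * k) + 1) |
      p ^ i ≤ k % p ^ i + (3 * k - k) % p ^ i} := by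
    have hlog : 1 ≤ Nat.log p (3 * k) := Nat.le_log_of_pow_le hp.one_lt (by simpa using hkp2.trans (by omega))
    simp only [Finset.mem_filter, Finset.mem_Ico, pow_one]
    refine ⟨⟨le_refl _, by omega⟩, ?_⟩
    have e1 : k % p = k := Nat.mod_eq_of_lt hk
    have e2 : (3 * k - k) % p = 2 * k - p := by
      rw [show 3 * k - k = 2 * k by omega, Nat.mod_eq_sub_mod hkp2,
        Nat.mod_eq_of_lt (by omega)]
    omega
  have : ({i ∈ Finset.Ico 1 (Nat.log p (3 * k) + 1) |
      p ^ i ≤ k % p ^ i + (3 * k - k) % p ^ i} : Finset ℕ).card ≠ 0 := by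
    simp only [ne_eq, Finset.card_eq_zero]
    intro hempty
    rw [hempty] at hmem
    exact absurd hmem (Finset.notMem_empty 1)
  exact this (by exact_mod_cast h0)
end

section
/- Let p be an odd prime. Then ∑_{s=0}^{p-1} (-1)^s · binom(2s, p−1) ≡ (-1)^{(p-1)/2} (mod p). -/
theorem stmt_17 (p : ℕ) (hp : p.Prime) (hodd : Odd p) :
    (∑ s ∈ Finset.range p, (-1 : ℤ) ^ s * ((2 * s).choose (p - 1) : ℤ)) ≡
      (-1) ^ ((p - 1) / 2) [ZMOD (p : ℤ)] := by
  haveI : Fact p.Prime := ⟨hp⟩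
  have hp2 : 2 ≤ p := hp.two_le
  have hpe : p - 1 + 1 = p := by omega
  have heven : 2 * ((p - 1) / 2) = p - 1 := by
    obtain ⟨k, hk⟩ := hodd; omega
  have key : ∀ s ∈ Finset.range p, s ≠ (p - 1) / 2 →
      (((2 * s).choose (p - 1) : ZMod p)) = 0 := by
    intro s hs hne
    rw [Finset.mem_range] at hs
    rcases lt_trichotomy (2 * s) (p - 1) with h | h | h
    · rw [Nat.choose_eq_zero_of_lt h]; simp
    · exact absurd (by omega) hne
    · -- 2*s > p-1, so p ≤ 2*s ≤ 2p-2
      have hge : p ≤ 2 * s := by omega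
      have hlt : 2 * s < 2 * p := by omega
      have hmod : (2 * s) % p = 2 * s - p := by
        rw [Nat.mod_eq_sub_mod hge, Nat.mod_eq_of_lt (by omega)]
      have hlucas := Choose.choose_modEq_choose_mod_mul_choose_div
        (n := 2 * s) (k := p - 1) (p := p)
      have h0 : (p - 1) / p = 0 := Nat.div_eq_of_lt (by omega)
      rw [hmod, Nat.mod_eq_of_lt (by omega), h0, Nat.choose_zero_right,
        Nat.choose_eq_zero_of_lt (show 2 * s - p < p - 1 by omega)] at hlucas
      have := (ZMod.intCast_eq_intCast_iff _ _ _).mpr hlucas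
      push_cast at this ⊢
      simpa using this
  rw [← ZMod.intCast_eq_intCast_iff]
  push_cast
  rw [Finset.sum_eq_single ((p - 1) / 2)]
  · rw [heven, Nat.choose_self]; ring
  · intro s hs hne
    rw [key s hs hne, mul_zero]
  · intro h
    exact absurd (Finset.mem_range.mpr (by omega)) h
end

section
/- Let p be an odd prime and let s be an integer with (p+1)/2 ≤ s ≤ p−1. Then ∑_{r=0}^{2s−p} 2^r · binom(2s, p+r) ≡ 3^{2s−p} (mod p). -/
theorem stmt_18 (p : ℕ) (hp : p.Prime) (hodd : Odd p) (s : ℕ)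
    (h1 : (p + 1) / 2 ≤ s) (h2 : s ≤ p - 1) :
    (∑ r ∈ Finset.range (2 * s - p + 1), 2 ^ r * ((2 * s).choose (p + r) : ℤ)) ≡
      3 ^ (2 * s - p) [ZMOD (p : ℤ)] := by
  haveI : Fact p.Prime := ⟨hp⟩
  have hp2 : 2 ≤ p := hp.two_le
  have hp1 : p + 1 ≤ 2 * s := by
    obtain ⟨k, hk⟩ := hodd
    omega
  set m := 2 * s - p with hm
  have hmlt : m < p := by omega
  have hmod : 2 * s % p = m := by
    rw [Nat.mod_eq_sub_mod (by omega), Nat.mod_eq_of_lt (by omega)]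
  have hdiv : 2 * s / p = 1 :=
    Nat.div_eq_of_lt_le (by omega) (by omega)
  rw [← ZMod.intCast_eq_intCast_iff]
  push_cast
  have key : ∀ r ∈ Finset.range (m + 1),
      (2 : ZMod p) ^ r * ((2 * s).choose (p + r) : ZMod p)
        = 2 ^ r * (m.choose r : ZMod p) := by
    intro r hr
    rw [Finset.mem_range] at hr
    have hrmod : (p + r) % p = r := by
      rw [Nat.add_mod_left, Nat.mod_eq_of_lt (by omega)]
    have hrdiv : (p + r) / p = 1 := by
      rw [Nat.add_div_left _ (by omega), Nat.div_eq_of_lt (by omega)]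
    have hl := @Choose.choose_modEq_choose_mod_mul_choose_div (2 * s) (p + r) p _
    rw [hmod, hdiv, hrmod, hrdiv] at hl
    have hl' := (ZMod.intCast_eq_intCast_iff _ _ _).mpr hl
    push_cast at hl'
    rw [hl']
    simp [mul_comm]
  rw [Finset.sum_congr rfl key]
  have := add_pow (2 : ZMod p) 1 m
  simp only [one_pow, mul_one] at this
  norm_num at this
  rw [← this]
end
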